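/- arXiv:1908.00261 — 5 statements merged into one kernel-verified Lean document; each statement's English description precedes it below -/
import Mathlib

section
/- (Global convergence of natural policy gradient in the tabular case) Consider a finite discounted MDP and the iteration π^{(t+1)}(a|s) = π^{(t)}(a|s) · exp(η A^{(t)}(s,a)/(1−γ)) / Z_t(s), where A^{(t)} = A^{π^{(t)}}, Z_t(s) = Σ_{a′} π^{(t)}(a′|s) exp(η A^{(t)}(s,a′)/(1−γ)), and π^{(0)} is the uniform policy π^{(0)}(a|s) = 1/|A|. Then for every η > 0, every starting state distribution ρ, and every T ≥ 1: V^{π^{(T)}}(ρ) ≥ V^⋆(ρ) − log|A|/(η T) − 1/((1−γ)² T). In particular, if η ≥ (1−γ)² log|A| then V^⋆(ρ) − V^{π^{(T)}}(ρ) ≤ 2/((1−γ)² T), so T ≥ 2/((1−γ)² ε) iterations suffice for an ε-optimal policy. -/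
open scoped BigOperators InnerProductSpace

/-- A finite Markov decision process (the data only: transition probabilities `P`,
rewards `r`, and discount factor `γ`). -/
structure FinMDP where
  S : Type
  A : Type
  [fS : Fintype S]
  [dS : DecidableEq S]
  [fA : Fintype A]
  [dA : DecidableEq A]
  P : S → A → S → ℝ
  r : S → A → ℝ
  γ : ℝ

attribute [instance] FinMDP.fS FinMDP.dS FinMDP.fA FinMDP.dA

/-- `μ` is a probability distribution on the finite type `X`. -/
def IsDist {X : Type*} [Fintype X] (μ : X → ℝ) : Prop :=
  (∀ x, 0 ≤ μ x) ∧ ∑ x, μ x = 1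

namespace FinMDP

variable (M : FinMDP)

/-- The MDP data is well formed: `P` is a transition kernel, rewards lie in `[0,1]`,
and `γ ∈ [0,1)`. -/
def Valid : Prop :=
  (∀ s a s', 0 ≤ M.P s a s') ∧ (∀ s a, ∑ s', M.P s a s' = 1) ∧
    (∀ s a, 0 ≤ M.r s a ∧ M.r s a ≤ 1) ∧ 0 ≤ M.γ ∧ M.γ < 1

/-- `π` is a stochastic policy: `π s a` is the probability `π(a|s)`. -/
def IsPolicy (π : M.S → M.A → ℝ) : Prop :=
  (∀ s a, 0 ≤ π s a) ∧ ∀ s, ∑ a, π s a = 1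

/-- State-to-state transition matrix induced by a policy. -/
noncomputable def Pmat (π : M.S → M.A → ℝ) : Matrix M.S M.S ℝ :=
  Matrix.of fun s s' => ∑ a, π s a * M.P s a s'

/-- Expected one-step reward under a policy. -/
noncomputable def rPol (π : M.S → M.A → ℝ) (s : M.S) : ℝ :=
  ∑ a, π s a * M.r s a

/-- The value function `V^π(s₀) = E[∑ₜ γ^t r(s_t, a_t)]`. -/
noncomputable def V (π : M.S → M.A → ℝ) (s₀ : M.S) : ℝ :=
  ∑' t : ℕ, M.γ ^ t * ((M.Pmat π ^ t).mulVec (M.rPol π)) s₀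

/-- `V^π(ρ)` for a starting state distribution `ρ`. -/
noncomputable def Vd (π : M.S → M.A → ℝ) (ρ : M.S → ℝ) : ℝ :=
  ∑ s, ρ s * M.V π s

/-- The action-value function `Q^π(s,a)`. -/
noncomputable def Qf (π : M.S → M.A → ℝ) (s : M.S) (a : M.A) : ℝ :=
  M.r s a + M.γ * ∑ s', M.P s a s' * M.V π s'

/-- The advantage function `A^π(s,a) = Q^π(s,a) - V^π(s)`. -/
noncomputable def Adv (π : M.S → M.A → ℝ) (s : M.S) (a : M.A) : ℝ :=
  M.Qf π s a - M.V π s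

/-- Discounted state visitation distribution `d^π_{s₀}(s)`. -/
noncomputable def dvisit (π : M.S → M.A → ℝ) (s₀ s : M.S) : ℝ :=
  (1 - M.γ) * ∑' t : ℕ, M.γ ^ t * (M.Pmat π ^ t) s₀ s

/-- Discounted state visitation distribution `d^π_μ(s)` for a starting distribution `μ`. -/
noncomputable def dvisitD (π : M.S → M.A → ℝ) (μ : M.S → ℝ) (s : M.S) : ℝ :=
  ∑ s₀, μ s₀ * M.dvisit π s₀ s

/-- State-action transition matrix induced by a policy. -/
noncomputable def PmatSA (π : M.S → M.A → ℝ) :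
    Matrix (M.S × M.A) (M.S × M.A) ℝ :=
  Matrix.of fun p q => M.P p.1 p.2 q.1 * π q.1 q.2

/-- Discounted state-action visitation measure `d^π_ν(s,a)` started from `(s₀,a₀) ∼ ν`,
executing `a₀` first and following `π` thereafter. -/
noncomputable def dvisitSA (π : M.S → M.A → ℝ) (ν : M.S × M.A → ℝ)
    (p : M.S × M.A) : ℝ :=
  (1 - M.γ) * ∑' t : ℕ, M.γ ^ t * ∑ p₀, ν p₀ * (M.PmatSA π ^ t) p₀ p

/-- The softmax policy `π_θ(a|s) = exp(θ_{s,a}) / ∑_{a'} exp(θ_{s,a'})`. -/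
noncomputable def softmaxPolicy (θ : EuclideanSpace ℝ (M.S × M.A)) :
    M.S → M.A → ℝ :=
  fun s a => Real.exp (θ (s, a)) / ∑ a', Real.exp (θ (s, a'))

end FinMDP

namespace FinMDP

variable {M : FinMDP}

section Lemmas

lemma pmat_nonneg (hM : M.Valid) {π : M.S → M.A → ℝ} (hπ : M.IsPolicy π) (s s' : M.S) :
    0 ≤ M.Pmat π s s' :=
  Finset.sum_nonneg fun a _ => mul_nonneg (hπ.1 s a) (hM.1 s a s')

lemma pmat_rowsum (hM : M.Valid) {π : M.S → M.A → ℝ} (hπ : M.IsPolicy π) (s : M.S) :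
    ∑ s', M.Pmat π s s' = 1 := by
  simp only [Pmat, Matrix.of_apply]
  rw [Finset.sum_comm]
  have : ∀ a : M.A, ∑ s', π s a * M.P s a s' = π s a := by
    intro a; rw [← Finset.mul_sum, hM.2.1 s a, mul_one]
  simp_rw [this]
  exact hπ.2 s

lemma pmat_pow_nonneg (hM : M.Valid) {π : M.S → M.A → ℝ} (hπ : M.IsPolicy π) (t : ℕ)
    (s s' : M.S) : 0 ≤ (M.Pmat π ^ t) s s' := by
  induction t generalizing s s' with
  | zero => simp [Matrix.one_apply]; positivity
  | succ t ih =>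
      rw [pow_succ, Matrix.mul_apply]
      exact Finset.sum_nonneg fun x _ => mul_nonneg (ih s x) (pmat_nonneg hM hπ x s')

lemma pmat_pow_rowsum (hM : M.Valid) {π : M.S → M.A → ℝ} (hπ : M.IsPolicy π) (t : ℕ)
    (s : M.S) : ∑ s', (M.Pmat π ^ t) s s' = 1 := by
  induction t generalizing s with
  | zero => simp [Matrix.one_apply]
  | succ t ih =>
      simp only [pow_succ, Matrix.mul_apply]
      rw [Finset.sum_comm]
      have : ∀ x : M.S, ∑ s', (M.Pmat π ^ t) s x * M.Pmat π x s' = (M.Pmat π ^ t) s x := by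
        intro x; rw [← Finset.mul_sum, pmat_rowsum hM hπ x, mul_one]
      simp_rw [this]
      exact ih s

lemma row_dot_bound {P : Matrix M.S M.S ℝ} (hP0 : ∀ s s', 0 ≤ P s s')
    (hP1 : ∀ s, ∑ s', P s s' = 1) {v : M.S → ℝ} {b c : ℝ}
    (hb : ∀ s, b ≤ v s) (hc : ∀ s, v s ≤ c) (s : M.S) :
    b ≤ P.mulVec v s ∧ P.mulVec v s ≤ c := by
  have h1 : P.mulVec v s = ∑ s', P s s' * v s' := rfl
  constructor
  · calc b = ∑ s', P s s' * b := by rw [← Finset.sum_mul, hP1 s, one_mul]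
      _ ≤ ∑ s', P s s' * v s' :=
        Finset.sum_le_sum fun s' _ => mul_le_mul_of_nonneg_left (hb s') (hP0 s s')
      _ = P.mulVec v s := h1.symm
  · calc P.mulVec v s = ∑ s', P s s' * v s' := h1
      _ ≤ ∑ s', P s s' * c :=
        Finset.sum_le_sum fun s' _ => mul_le_mul_of_nonneg_left (hc s') (hP0 s s')
      _ = c := by rw [← Finset.sum_mul, hP1 s, one_mul]

lemma mulVec_pow_bound (hM : M.Valid) {π : M.S → M.A → ℝ} (hπ : M.IsPolicy π)
    {v : M.S → ℝ} {b c : ℝ} (hb : ∀ s, b ≤ v s) (hc : ∀ s, v s ≤ c) (t : ℕ) (s : M.S) :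
    b ≤ (M.Pmat π ^ t).mulVec v s ∧ (M.Pmat π ^ t).mulVec v s ≤ c := by
  induction t generalizing s with
  | zero => simpa [Matrix.one_mulVec] using ⟨hb s, hc s⟩
  | succ t ih =>
      have : (M.Pmat π ^ (t+1)).mulVec v = (M.Pmat π).mulVec ((M.Pmat π ^ t).mulVec v) := by
        rw [Matrix.mulVec_mulVec, ← pow_succ']
      rw [this]
      exact row_dot_bound (pmat_nonneg hM hπ) (pmat_rowsum hM hπ)
        (fun s' => (ih s').1) (fun s' => (ih s').2) s

lemma summable_aux (hM : M.Valid) {π : M.S → M.A → ℝ} (hπ : M.IsPolicy π)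
    {v : M.S → ℝ} {c : ℝ} (hc : ∀ s, |v s| ≤ c) (s : M.S) :
    Summable fun t : ℕ => M.γ ^ t * ((M.Pmat π ^ t).mulVec v) s := by
  apply Summable.of_norm_bounded (g := fun t => c * M.γ ^ t)
    (((summable_geometric_of_lt_one hM.2.2.2.1 hM.2.2.2.2)).mul_left c)
  intro t
  have hbd := mulVec_pow_bound hM hπ (v := v) (b := -c) (c := c)
    (fun s' => (abs_le.mp (hc s')).1) (fun s' => (abs_le.mp (hc s')).2) t s
  have : |((M.Pmat π ^ t).mulVec v) s| ≤ c := abs_le.mpr ⟨hbd.1, hbd.2⟩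
  rw [Real.norm_eq_abs, abs_mul, abs_pow, abs_of_nonneg hM.2.2.2.1, mul_comm]
  exact mul_le_mul_of_nonneg_right this (pow_nonneg hM.2.2.2.1 t)

lemma rPol_bounds (hM : M.Valid) {π : M.S → M.A → ℝ} (hπ : M.IsPolicy π) (s : M.S) :
    0 ≤ M.rPol π s ∧ M.rPol π s ≤ 1 := by
  constructor
  · exact Finset.sum_nonneg fun a _ => mul_nonneg (hπ.1 s a) (hM.2.2.1 s a).1
  · calc M.rPol π s ≤ ∑ a, π s a * 1 :=
        Finset.sum_le_sum fun a _ => mul_le_mul_of_nonneg_left (hM.2.2.1 s a).2 (hπ.1 s a)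
      _ = 1 := by simp [hπ.2 s]

lemma summable_V (hM : M.Valid) {π : M.S → M.A → ℝ} (hπ : M.IsPolicy π) (s : M.S) :
    Summable fun t : ℕ => M.γ ^ t * ((M.Pmat π ^ t).mulVec (M.rPol π)) s :=
  summable_aux hM hπ (c := 1)
    (fun s' => abs_le.mpr ⟨by linarith [(rPol_bounds hM hπ s').1], (rPol_bounds hM hπ s').2⟩) s

lemma V_bounds (hM : M.Valid) {π : M.S → M.A → ℝ} (hπ : M.IsPolicy π) (s : M.S) :
    0 ≤ M.V π s ∧ M.V π s ≤ 1 / (1 - M.γ) := by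
  have hγ0 := hM.2.2.2.1; have hγ1 := hM.2.2.2.2
  have hrb : ∀ s', 0 ≤ M.rPol π s' ∧ M.rPol π s' ≤ 1 := rPol_bounds hM hπ
  have hbd := fun t s' => mulVec_pow_bound hM hπ (v := M.rPol π) (b := 0) (c := 1)
    (fun x => (hrb x).1) (fun x => (hrb x).2) t s'
  constructor
  · exact tsum_nonneg fun t => mul_nonneg (pow_nonneg hγ0 t) (hbd t s).1
  · have h1 : M.V π s ≤ ∑' t : ℕ, M.γ ^ t := by
      apply Summable.tsum_le_tsum _ (summable_V hM hπ s) (summable_geometric_of_lt_one hγ0 hγ1)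
      intro t
      have := mul_le_mul_of_nonneg_left (hbd t s).2 (pow_nonneg hγ0 t)
      simpa using this
    rw [tsum_geometric_of_lt_one hγ0 hγ1] at h1
    rw [one_div]
    exact h1

lemma bellman (hM : M.Valid) {π : M.S → M.A → ℝ} (hπ : M.IsPolicy π) (s : M.S) :
    M.V π s = M.rPol π s + M.γ * ∑ s', M.Pmat π s s' * M.V π s' := by
  have hsum := summable_V hM hπ s
  rw [V, Summable.tsum_eq_zero_add hsum]
  congr 1
  · simp [Matrix.one_mulVec]
  · have key : ∀ t : ℕ, M.γ ^ (t+1) * ((M.Pmat π ^ (t+1)).mulVec (M.rPol π)) s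
        = ∑ s', M.γ * (M.Pmat π s s' * (M.γ ^ t * ((M.Pmat π ^ t).mulVec (M.rPol π)) s')) := by
      intro t
      have : (M.Pmat π ^ (t+1)).mulVec (M.rPol π)
          = (M.Pmat π).mulVec ((M.Pmat π ^ t).mulVec (M.rPol π)) := by
        rw [Matrix.mulVec_mulVec, ← pow_succ']
      rw [this]
      have : (M.Pmat π).mulVec ((M.Pmat π ^ t).mulVec (M.rPol π)) s
          = ∑ s', M.Pmat π s s' * ((M.Pmat π ^ t).mulVec (M.rPol π)) s' := rfl
      rw [this, Finset.mul_sum]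
      congr 1; ext s'; ring
    simp_rw [key]
    rw [Summable.tsum_finsetSum (fun s' _ => (((summable_V hM hπ s').mul_left (M.Pmat π s s')).mul_left M.γ))]
    rw [Finset.mul_sum]
    congr 1; ext s'
    rw [tsum_mul_left, tsum_mul_left]
    rfl

lemma advSum_eq {π' π : M.S → M.A → ℝ} (hπ' : M.IsPolicy π') (s : M.S) :
    ∑ a, π' s a * M.Adv π s a
      = M.rPol π' s + M.γ * ((M.Pmat π').mulVec (M.V π)) s - M.V π s := by
  simp only [Adv, Qf]
  have step : ∀ a, π' s a * (M.r s a + M.γ * ∑ s', M.P s a s' * M.V π s' - M.V π s)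
      = π' s a * M.r s a + M.γ * ∑ s', π' s a * M.P s a s' * M.V π s'
        - π' s a * M.V π s := by
    intro a
    have h3 : ∑ s', π' s a * M.P s a s' * M.V π s'
        = π' s a * ∑ s', M.P s a s' * M.V π s' := by
      rw [Finset.mul_sum]; simp_rw [mul_assoc]
    rw [h3]; ring
  simp_rw [step]
  have h2 : ∑ a, M.γ * ∑ s', π' s a * M.P s a s' * M.V π s'
      = M.γ * ((M.Pmat π').mulVec (M.V π)) s := by
    rw [← Finset.mul_sum, Finset.sum_comm]
    congr 1
    have h4 : ((M.Pmat π').mulVec (M.V π)) s = ∑ s', (∑ a, π' s a * M.P s a s') * M.V π s' := rfl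
    rw [h4]
    exact Finset.sum_congr rfl fun s' _ => (Finset.sum_mul ..).symm
  rw [Finset.sum_sub_distrib, Finset.sum_add_distrib, ← Finset.sum_mul, hπ'.2 s, one_mul, h2]
  rfl

lemma pdl (hM : M.Valid) {π' π : M.S → M.A → ℝ} (hπ' : M.IsPolicy π') (hπ : M.IsPolicy π)
    (s₀ : M.S) :
    (∑' t : ℕ, M.γ ^ t *
        ((M.Pmat π' ^ t).mulVec (fun s => ∑ a, π' s a * M.Adv π s a)) s₀)
      = M.V π' s₀ - M.V π s₀ := by
  have hγ0 := hM.2.2.2.1; have hγ1 := hM.2.2.2.2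
  have h1γ : 0 < 1 - M.γ := by linarith
  have h0γ : (0:ℝ) ≤ 1 / (1 - M.γ) := by positivity
  have hVb : ∀ s, |M.V π s| ≤ 1 / (1 - M.γ) := fun s => abs_le.mpr
    ⟨by linarith [(V_bounds hM hπ s).1], (V_bounds hM hπ s).2⟩
  set u : ℕ → ℝ := fun t => M.γ ^ t * ((M.Pmat π' ^ t).mulVec (M.V π)) s₀ with hu_def
  set av : ℕ → ℝ := fun t => M.γ ^ t * ((M.Pmat π' ^ t).mulVec (M.rPol π')) s₀ with hav_def
  have ha : Summable av := summable_V hM hπ' s₀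
  have hu : Summable u := summable_aux hM hπ' hVb s₀
  have hu' : Summable (fun t => u (t + 1)) := by
    rw [summable_nat_add_iff 1]; exact hu
  have hterm : ∀ t : ℕ, M.γ ^ t *
      ((M.Pmat π' ^ t).mulVec (fun s => ∑ a, π' s a * M.Adv π s a)) s₀
      = av t + (u (t + 1) - u t) := by
    intro t
    have hf : (fun s => ∑ a, π' s a * M.Adv π s a)
        = M.rPol π' + (M.γ • (M.Pmat π').mulVec (M.V π) - M.V π) := by
      funext s
      rw [advSum_eq hπ']
      simp only [Pi.add_apply, Pi.sub_apply, Pi.smul_apply, smul_eq_mul]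
      ring
    rw [hf, Matrix.mulVec_add, Matrix.mulVec_sub, Matrix.mulVec_smul, Matrix.mulVec_mulVec,
      ← pow_succ]
    simp only [hav_def, hu_def, Pi.add_apply, Pi.sub_apply, Pi.smul_apply, smul_eq_mul]
    ring
  simp_rw [hterm]
  rw [Summable.tsum_add ha (hu'.sub hu), Summable.tsum_sub hu' hu]
  have hshift : ∑' t : ℕ, u t = u 0 + ∑' t : ℕ, u (t + 1) := Summable.tsum_eq_zero_add hu
  have hu0 : u 0 = M.V π s₀ := by simp [hu_def, Matrix.one_mulVec, V]
  have hav : ∑' t, av t = M.V π' s₀ := rfl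
  rw [hav]
  rw [hshift, hu0]
  ring

lemma pmat_pow_le_one (hM : M.Valid) {π : M.S → M.A → ℝ} (hπ : M.IsPolicy π) (t : ℕ)
    (s s' : M.S) : (M.Pmat π ^ t) s s' ≤ 1 := by
  calc (M.Pmat π ^ t) s s' ≤ ∑ x, (M.Pmat π ^ t) s x :=
      Finset.single_le_sum (fun x _ => pmat_pow_nonneg hM hπ t s x) (Finset.mem_univ s')
    _ = 1 := pmat_pow_rowsum hM hπ t s

lemma summable_entry (hM : M.Valid) {π : M.S → M.A → ℝ} (hπ : M.IsPolicy π) (s₀ s : M.S) :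
    Summable fun t : ℕ => M.γ ^ t * (M.Pmat π ^ t) s₀ s := by
  apply Summable.of_norm_bounded (g := fun t => M.γ ^ t)
    (summable_geometric_of_lt_one hM.2.2.2.1 hM.2.2.2.2)
  intro t
  rw [Real.norm_eq_abs, abs_mul, abs_pow, abs_of_nonneg hM.2.2.2.1,
    abs_of_nonneg (pmat_pow_nonneg hM hπ t s₀ s)]
  nth_rewrite 2 [← mul_one (M.γ ^ t)]
  exact mul_le_mul_of_nonneg_left (pmat_pow_le_one hM hπ t s₀ s) (pow_nonneg hM.2.2.2.1 t)

lemma improve_ge (hM : M.Valid) {π' π : M.S → M.A → ℝ} (hπ' : M.IsPolicy π')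
    (hπ : M.IsPolicy π) (hf : ∀ s, 0 ≤ ∑ a, π' s a * M.Adv π s a) (s₀ : M.S) :
    (∑ a, π' s₀ a * M.Adv π s₀ a) ≤ M.V π' s₀ - M.V π s₀ := by
  rw [← pdl hM hπ' hπ s₀]
  set f : M.S → ℝ := fun s => ∑ a, π' s a * M.Adv π s a with hf_def
  have hfb : ∀ s, |f s| ≤ ∑ x, |f x| := by
    intro s
    exact Finset.single_le_sum (f := fun x => |f x|) (fun x _ => abs_nonneg _)
      (Finset.mem_univ s)
  have hsum : Summable fun t : ℕ => M.γ ^ t * ((M.Pmat π' ^ t).mulVec f) s₀ :=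
    summable_aux hM hπ' hfb s₀
  have hnn : ∀ t : ℕ, 0 ≤ M.γ ^ t * ((M.Pmat π' ^ t).mulVec f) s₀ := by
    intro t
    refine mul_nonneg (pow_nonneg hM.2.2.2.1 t) ?_
    exact Finset.sum_nonneg fun s' _ => mul_nonneg (pmat_pow_nonneg hM hπ' t s₀ s') (hf s')
  have h0 := Summable.le_tsum hsum 0 (fun j _ => hnn j)
  simpa [Matrix.one_mulVec] using h0

lemma advSum_self (hM : M.Valid) {π : M.S → M.A → ℝ} (hπ : M.IsPolicy π) (s : M.S) :
    ∑ a, π s a * M.Adv π s a = 0 := by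
  rw [advSum_eq hπ]
  have h := bellman hM hπ s
  have h2 : ((M.Pmat π).mulVec (M.V π)) s = ∑ s', M.Pmat π s s' * M.V π s' := rfl
  rw [h2]
  linarith

lemma pdl_weighted (hM : M.Valid) {π' π : M.S → M.A → ℝ} (hπ' : M.IsPolicy π')
    (hπ : M.IsPolicy π) (s₀ : M.S) :
    M.V π' s₀ - M.V π s₀
      = ∑ s, (∑' t : ℕ, M.γ ^ t * (M.Pmat π' ^ t) s₀ s) * (∑ a, π' s a * M.Adv π s a) := by
  rw [← pdl hM hπ' hπ s₀]
  set f : M.S → ℝ := fun s => ∑ a, π' s a * M.Adv π s a with hf_def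
  have hterm : ∀ t : ℕ, M.γ ^ t * ((M.Pmat π' ^ t).mulVec f) s₀
      = ∑ s, M.γ ^ t * (M.Pmat π' ^ t) s₀ s * f s := by
    intro t
    have : ((M.Pmat π' ^ t).mulVec f) s₀ = ∑ s, (M.Pmat π' ^ t) s₀ s * f s := rfl
    rw [this, Finset.mul_sum]
    exact Finset.sum_congr rfl fun s _ => by ring
  simp_rw [hterm]
  rw [Summable.tsum_finsetSum (fun s _ => ((summable_entry hM hπ' s₀ s).mul_right (f s)))]
  exact Finset.sum_congr rfl fun s _ => (tsum_mul_right)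

lemma kl_nonneg {ι : Type*} [Fintype ι] {p q : ι → ℝ} (hp : IsDist p) (hq : IsDist q)
    (hqpos : ∀ a, 0 < q a) :
    0 ≤ ∑ a, p a * (Real.log (p a) - Real.log (q a)) := by
  have key : ∀ a, p a * (Real.log (q a) - Real.log (p a)) ≤ q a - p a := by
    intro a
    rcases eq_or_lt_of_le (hp.1 a) with h | h
    · rw [← h]; simpa using (hqpos a).le
    · have hlog : Real.log (q a) - Real.log (p a) ≤ q a / p a - 1 := by
        rw [← Real.log_div (hqpos a).ne' h.ne']
        exact Real.log_le_sub_one_of_pos (div_pos (hqpos a) h)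
      calc p a * (Real.log (q a) - Real.log (p a)) ≤ p a * (q a / p a - 1) :=
          mul_le_mul_of_nonneg_left hlog h.le
        _ = q a - p a := by field_simp
  have hsum : ∑ a, p a * (Real.log (q a) - Real.log (p a)) ≤ 0 := by
    calc ∑ a, p a * (Real.log (q a) - Real.log (p a)) ≤ ∑ a, (q a - p a) :=
        Finset.sum_le_sum fun a _ => key a
      _ = 0 := by rw [Finset.sum_sub_distrib, hp.2, hq.2, sub_self]
  have : ∑ a, p a * (Real.log (p a) - Real.log (q a))
      = -∑ a, p a * (Real.log (q a) - Real.log (p a)) := by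
    rw [← Finset.sum_neg_distrib]
    exact Finset.sum_congr rfl fun a _ => by ring
  rw [this]
  linarith

lemma master (hM : M.Valid) {η : ℝ} (hη : 0 < η)
    {π : ℕ → M.S → M.A → ℝ}
    (h0 : ∀ s a, π 0 s a = 1 / (Fintype.card M.A : ℝ))
    (hupd : ∀ t s a, π (t + 1) s a =
        π t s a * Real.exp (η * M.Adv (π t) s a / (1 - M.γ)) /
          ∑ a', π t s a' * Real.exp (η * M.Adv (π t) s a' / (1 - M.γ)))
    {ρ : M.S → ℝ} (hρ : IsDist ρ) {T : ℕ} (hT : 1 ≤ T) (hA : Nonempty M.A)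
    {πs : M.S → M.A → ℝ} (hπs : M.IsPolicy πs) :
    M.Vd πs ρ - M.Vd (π T) ρ
      ≤ Real.log (Fintype.card M.A) / (η * T) + 1 / ((1 - M.γ) ^ 2 * T) := by
  have hγ0 := hM.2.2.2.1
  have hγ1 := hM.2.2.2.2
  have h1γ : 0 < 1 - M.γ := by linarith
  have hKpos : (0 : ℝ) < (Fintype.card M.A : ℝ) := by
    exact_mod_cast Fintype.card_pos
  set Z : ℕ → M.S → ℝ :=
    fun t s => ∑ a', π t s a' * Real.exp (η * M.Adv (π t) s a' / (1 - M.γ)) with hZ_def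
  -- Step 1: every iterate is a positive policy
  have hpp : ∀ t, (∀ s a, 0 < π t s a) ∧ M.IsPolicy (π t) := by
    intro t
    induction t with
    | zero =>
        have hpos : ∀ s a, 0 < π 0 s a := by
          intro s a; rw [h0]; positivity
        refine ⟨hpos, fun s a => (hpos s a).le, fun s => ?_⟩
        simp only [h0]
        rw [Finset.sum_const, nsmul_eq_mul]
        field_simp
        rw [Finset.card_univ]
    | succ t ih =>
        have hZpos : ∀ s, 0 < Z t s := fun s =>
          Finset.sum_pos (fun a _ => mul_pos (ih.1 s a) (Real.exp_pos _))
            Finset.univ_nonempty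
        have hpos : ∀ s a, 0 < π (t+1) s a := by
          intro s a; rw [hupd]
          exact div_pos (mul_pos (ih.1 s a) (Real.exp_pos _)) (hZpos s)
        refine ⟨hpos, fun s a => (hpos s a).le, fun s => ?_⟩
        simp only [hupd]
        rw [← Finset.sum_div, div_self (hZpos s).ne']
  have hpol : ∀ t, M.IsPolicy (π t) := fun t => (hpp t).2
  have hpos : ∀ t s a, 0 < π t s a := fun t => (hpp t).1
  have hZpos : ∀ t s, 0 < Z t s := fun t s =>
    Finset.sum_pos (fun a _ => mul_pos (hpos t s a) (Real.exp_pos _)) Finset.univ_nonempty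
  -- Step 2 : Z ≥ 1, log Z ≥ 0
  have hZ1 : ∀ t s, 1 ≤ Z t s := by
    intro t s
    have h1 : ∑ a, π t s a * (η * M.Adv (π t) s a / (1 - M.γ) + 1) = 1 := by
      have hterm : ∀ a : M.A, π t s a * (η * M.Adv (π t) s a / (1 - M.γ) + 1)
          = (η / (1 - M.γ)) * (π t s a * M.Adv (π t) s a) + π t s a := by
        intro a; field_simp
      simp_rw [hterm]
      rw [Finset.sum_add_distrib, ← Finset.mul_sum, advSum_self hM (hpol t) s,
        (hpol t).2 s, mul_zero, zero_add]
    calc (1:ℝ) = ∑ a, π t s a * (η * M.Adv (π t) s a / (1 - M.γ) + 1) := h1.symm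
      _ ≤ Z t s := by
        apply Finset.sum_le_sum
        intro a _
        exact mul_le_mul_of_nonneg_left (Real.add_one_le_exp _) (hpos t s a).le
  have hlZ0 : ∀ t s, 0 ≤ Real.log (Z t s) := fun t s => Real.log_nonneg (hZ1 t s)
  -- Step 3 : the softmax log identity
  have hAdv : ∀ t s a, M.Adv (π t) s a
      = (1 - M.γ) / η * (Real.log (π (t+1) s a) - Real.log (π t s a)
          + Real.log (Z t s)) := by
    intro t s a
    have hlog : Real.log (π (t+1) s a)
        = Real.log (π t s a) + η * M.Adv (π t) s a / (1 - M.γ) - Real.log (Z t s) := by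
      rw [hupd]
      rw [Real.log_div (mul_pos (hpos t s a) (Real.exp_pos _)).ne' (hZpos t s).ne',
        Real.log_mul (hpos t s a).ne' (Real.exp_pos _).ne', Real.log_exp]
    rw [hlog]
    field_simp
    ring
  -- Step 4 : monotone improvement with log Z lower bound
  have himp : ∀ t s₀, (1 - M.γ) / η * Real.log (Z t s₀)
      ≤ M.V (π (t+1)) s₀ - M.V (π t) s₀ := by
    intro t s₀
    have hfs : ∀ s, (1 - M.γ) / η * Real.log (Z t s)
        ≤ ∑ a, π (t+1) s a * M.Adv (π t) s a := by
      intro s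
      have hkl : 0 ≤ ∑ a, π (t+1) s a *
          (Real.log (π (t+1) s a) - Real.log (π t s a)) :=
        kl_nonneg ⟨(hpol (t+1)).1 s, (hpol (t+1)).2 s⟩ ⟨(hpol t).1 s, (hpol t).2 s⟩
          (hpos t s)
      have hcomp : ∑ a, π (t+1) s a * M.Adv (π t) s a
          = (1 - M.γ) / η * ((∑ a, π (t+1) s a *
              (Real.log (π (t+1) s a) - Real.log (π t s a))) + Real.log (Z t s)) := by
        have hterm : ∀ a : M.A, π (t+1) s a * M.Adv (π t) s a
            = (1 - M.γ) / η * (π (t+1) s a *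
                (Real.log (π (t+1) s a) - Real.log (π t s a)))
              + (1 - M.γ) / η * Real.log (Z t s) * π (t+1) s a := by
          intro a; rw [hAdv t s a]; ring
        simp_rw [hterm]
        rw [Finset.sum_add_distrib, ← Finset.mul_sum, ← Finset.mul_sum,
          (hpol (t+1)).2 s, mul_one]
        ring
      rw [hcomp]
      have hcoef : 0 ≤ (1 - M.γ) / η := by positivity
      nlinarith [hlZ0 t s]
    have hf0 : ∀ s, 0 ≤ ∑ a, π (t+1) s a * M.Adv (π t) s a := by
      intro s
      refine le_trans ?_ (hfs s)
      have : 0 ≤ (1 - M.γ) / η := by positivity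
      exact mul_nonneg this (hlZ0 t s)
    calc (1 - M.γ) / η * Real.log (Z t s₀) ≤ ∑ a, π (t+1) s₀ a * M.Adv (π t) s₀ a := hfs s₀
      _ ≤ M.V (π (t+1)) s₀ - M.V (π t) s₀ := improve_ge hM (hpol (t+1)) (hpol t) hf0 s₀
  -- Step 5 : monotonicity of values
  have hVmono : ∀ s, Monotone fun t => M.V (π t) s := by
    intro s
    apply monotone_nat_of_le_succ
    intro t
    have h1 := himp t s
    have h2 : 0 ≤ (1 - M.γ) / η * Real.log (Z t s) :=
      mul_nonneg (by positivity) (hlZ0 t s)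
    linarith
  have hVdmono : ∀ t, t ≤ T → M.Vd (π t) ρ ≤ M.Vd (π T) ρ := by
    intro t ht
    apply Finset.sum_le_sum
    intro s _
    exact mul_le_mul_of_nonneg_left (hVmono s ht) (hρ.1 s)
  -- Step 6 : the weight vector w
  set w : M.S → ℝ := fun s => ∑ s₀, ρ s₀ * ∑' k : ℕ, M.γ ^ k * (M.Pmat πs ^ k) s₀ s
    with hw_def
  have hw0 : ∀ s, 0 ≤ w s := by
    intro s
    refine Finset.sum_nonneg fun s₀ _ => mul_nonneg (hρ.1 s₀) (tsum_nonneg fun k => ?_)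
    exact mul_nonneg (pow_nonneg hγ0 k) (pmat_pow_nonneg hM hπs k s₀ s)
  have hwsum : ∑ s, w s = (1 - M.γ)⁻¹ := by
    rw [Finset.sum_comm]
    have hrow : ∀ s₀ : M.S, ∑ s, ρ s₀ * ∑' k : ℕ, M.γ ^ k * (M.Pmat πs ^ k) s₀ s
        = ρ s₀ * (1 - M.γ)⁻¹ := by
      intro s₀
      rw [← Finset.mul_sum]
      congr 1
      rw [← Summable.tsum_finsetSum (fun s _ => summable_entry hM hπs s₀ s)]
      have : ∀ k : ℕ, ∑ s, M.γ ^ k * (M.Pmat πs ^ k) s₀ s = M.γ ^ k := by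
        intro k
        rw [← Finset.mul_sum, pmat_pow_rowsum hM hπs k s₀, mul_one]
      simp_rw [this]
      exact tsum_geometric_of_lt_one hγ0 hγ1
    simp_rw [hrow]
    rw [← Finset.sum_mul, hρ.2, one_mul]
  -- Step 7 : weighted PDL against the comparator
  have hpdlw : ∀ t', M.Vd πs ρ - M.Vd (π t') ρ
      = ∑ s, w s * (∑ a, πs s a * M.Adv (π t') s a) := by
    intro t'
    have h1 : M.Vd πs ρ - M.Vd (π t') ρ
        = ∑ s₀, ρ s₀ * (M.V πs s₀ - M.V (π t') s₀) := by
      simp only [Vd]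
      rw [← Finset.sum_sub_distrib]
      exact Finset.sum_congr rfl fun s₀ _ => by ring
    rw [h1]
    have h2 : ∀ s₀ : M.S, ρ s₀ * (M.V πs s₀ - M.V (π t') s₀)
        = ∑ s, ρ s₀ * ((∑' k : ℕ, M.γ ^ k * (M.Pmat πs ^ k) s₀ s)
            * (∑ a, πs s a * M.Adv (π t') s a)) := by
      intro s₀
      rw [pdl_weighted hM hπs (hpol t') s₀, Finset.mul_sum]
    simp_rw [h2]
    rw [Finset.sum_comm]
    apply Finset.sum_congr rfl
    intro s _
    rw [hw_def, Finset.sum_mul]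
    exact Finset.sum_congr rfl fun s₀ _ => by ring
  -- Step 8 : KL decomposition of the comparator advantage sum
  set klS : ℕ → M.S → ℝ :=
    fun t s => ∑ a, πs s a * (Real.log (πs s a) - Real.log (π t s a)) with hklS_def
  have hg : ∀ t s, ∑ a, πs s a * M.Adv (π t) s a
      = (1 - M.γ) / η * (klS t s - klS (t+1) s + Real.log (Z t s)) := by
    intro t s
    have hterm : ∀ a : M.A, πs s a * M.Adv (π t) s a
        = (1 - M.γ) / η * ((πs s a * (Real.log (πs s a) - Real.log (π t s a))
            - πs s a * (Real.log (πs s a) - Real.log (π (t+1) s a)))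
          + Real.log (Z t s) * πs s a) := by
      intro a; rw [hAdv t s a]; ring
    simp_rw [hterm]
    rw [← Finset.mul_sum, Finset.sum_add_distrib, Finset.sum_sub_distrib,
      ← Finset.mul_sum, hπs.2 s, mul_one]
  -- Step 9 : per-step inequality
  have hstep : ∀ t, M.Vd πs ρ - M.Vd (π t) ρ
      ≤ (1 - M.γ) / η * ∑ s, (w s * klS t s - w s * klS (t+1) s)
        + ∑ s, (w s * M.V (π (t+1)) s - w s * M.V (π t) s) := by
    intro t
    rw [hpdlw t]
    have hsplit : ∑ s, w s * (∑ a, πs s a * M.Adv (π t) s a)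
        = (1 - M.γ) / η * ∑ s, (w s * klS t s - w s * klS (t+1) s)
          + ∑ s, w s * ((1 - M.γ) / η * Real.log (Z t s)) := by
      rw [Finset.mul_sum, ← Finset.sum_add_distrib]
      apply Finset.sum_congr rfl
      intro s _
      rw [hg t s]
      ring
    rw [hsplit]
    have hB : ∑ s, w s * ((1 - M.γ) / η * Real.log (Z t s))
        ≤ ∑ s, (w s * M.V (π (t+1)) s - w s * M.V (π t) s) := by
      apply Finset.sum_le_sum
      intro s _
      have := mul_le_mul_of_nonneg_left (himp t s) (hw0 s)
      linarith [this]
    linarith [hB]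
  -- Step 10 : sum over t < T and telescope
  have hsumT : ∑ t ∈ Finset.range T, (M.Vd πs ρ - M.Vd (π t) ρ)
      ≤ (1 - M.γ) / η * ∑ s, (w s * klS 0 s - w s * klS T s)
        + ∑ s, (w s * M.V (π T) s - w s * M.V (π 0) s) := by
    calc ∑ t ∈ Finset.range T, (M.Vd πs ρ - M.Vd (π t) ρ)
        ≤ ∑ t ∈ Finset.range T,
            ((1 - M.γ) / η * ∑ s, (w s * klS t s - w s * klS (t+1) s)
              + ∑ s, (w s * M.V (π (t+1)) s - w s * M.V (π t) s)) :=
          Finset.sum_le_sum fun t _ => hstep t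
      _ = (1 - M.γ) / η * ∑ s, (w s * klS 0 s - w s * klS T s)
            + ∑ s, (w s * M.V (π T) s - w s * M.V (π 0) s) := by
          rw [Finset.sum_add_distrib, ← Finset.mul_sum]
          congr 1
          · congr 1
            rw [Finset.sum_comm]
            apply Finset.sum_congr rfl
            intro s _
            exact Finset.sum_range_sub' (fun t => w s * klS t s) T
          · rw [Finset.sum_comm]
            apply Finset.sum_congr rfl
            intro s _
            exact Finset.sum_range_sub (fun t => w s * M.V (π t) s) T
  -- Step 11 : bound the two terms
  have hlogK0 : 0 ≤ Real.log (Fintype.card M.A) := by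
    apply Real.log_nonneg
    exact_mod_cast Fintype.card_pos
  have hkl0 : ∀ s, klS 0 s ≤ Real.log (Fintype.card M.A) := by
    intro s
    have hterm : ∀ a : M.A, πs s a * (Real.log (πs s a) - Real.log (π 0 s a))
        = πs s a * Real.log (πs s a) + Real.log (Fintype.card M.A) * πs s a := by
      intro a
      rw [h0, one_div, Real.log_inv]
      ring
    rw [hklS_def]
    simp only
    simp_rw [hterm]
    rw [Finset.sum_add_distrib, ← Finset.mul_sum, hπs.2 s, mul_one]
    have hneg : ∑ a, πs s a * Real.log (πs s a) ≤ 0 := by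
      apply Finset.sum_nonpos
      intro a _
      apply mul_nonpos_of_nonneg_of_nonpos (hπs.1 s a)
      apply Real.log_nonpos (hπs.1 s a)
      calc πs s a ≤ ∑ a', πs s a' :=
          Finset.single_le_sum (fun a' _ => hπs.1 s a') (Finset.mem_univ a)
        _ = 1 := hπs.2 s
    linarith
  have hklT : ∀ s, 0 ≤ klS T s := fun s =>
    kl_nonneg ⟨hπs.1 s, hπs.2 s⟩ ⟨(hpol T).1 s, (hpol T).2 s⟩ (hpos T s)
  have hbound1 : ∑ s, (w s * klS 0 s - w s * klS T s)
      ≤ Real.log (Fintype.card M.A) * (1 - M.γ)⁻¹ := by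
    calc ∑ s, (w s * klS 0 s - w s * klS T s)
        ≤ ∑ s, w s * Real.log (Fintype.card M.A) := by
          apply Finset.sum_le_sum
          intro s _
          have h1 := mul_le_mul_of_nonneg_left (hkl0 s) (hw0 s)
          have h2 := mul_nonneg (hw0 s) (hklT s)
          linarith
      _ = Real.log (Fintype.card M.A) * (1 - M.γ)⁻¹ := by
          rw [← Finset.sum_mul, hwsum]; ring
  have hbound2 : ∑ s, (w s * M.V (π T) s - w s * M.V (π 0) s)
      ≤ (1 - M.γ)⁻¹ * (1 - M.γ)⁻¹ := by
    calc ∑ s, (w s * M.V (π T) s - w s * M.V (π 0) s)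
        ≤ ∑ s, w s * (1 / (1 - M.γ)) := by
          apply Finset.sum_le_sum
          intro s _
          have h1 := mul_le_mul_of_nonneg_left ((V_bounds hM (hpol T) s).2) (hw0 s)
          have h2 := mul_nonneg (hw0 s) ((V_bounds hM (hpol 0) s).1)
          linarith
      _ = (1 - M.γ)⁻¹ * (1 - M.γ)⁻¹ := by
          rw [← Finset.sum_mul, hwsum, one_div]
  -- Step 12 : combine
  have hTpos : (0 : ℝ) < T := by exact_mod_cast hT
  have hfinal : ∑ t ∈ Finset.range T, (M.Vd πs ρ - M.Vd (π t) ρ)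
      ≤ Real.log (Fintype.card M.A) / η + 1 / (1 - M.γ) ^ 2 := by
    have hcoef : 0 ≤ (1 - M.γ) / η := by positivity
    have h1 := hsumT
    have h2 := mul_le_mul_of_nonneg_left hbound1 hcoef
    have heq1 : (1 - M.γ) / η * (Real.log (Fintype.card M.A) * (1 - M.γ)⁻¹)
        = Real.log (Fintype.card M.A) / η := by
      field_simp
    have heq2 : (1 - M.γ)⁻¹ * (1 - M.γ)⁻¹ = 1 / (1 - M.γ) ^ 2 := by
      field_simp
    linarith [h1, h2, hbound1, hbound2]
  have hlb : (T : ℝ) * (M.Vd πs ρ - M.Vd (π T) ρ)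
      ≤ ∑ t ∈ Finset.range T, (M.Vd πs ρ - M.Vd (π t) ρ) := by
    calc (T : ℝ) * (M.Vd πs ρ - M.Vd (π T) ρ)
        = ∑ _t ∈ Finset.range T, (M.Vd πs ρ - M.Vd (π T) ρ) := by
          rw [Finset.sum_const, Finset.card_range, nsmul_eq_mul]
      _ ≤ ∑ t ∈ Finset.range T, (M.Vd πs ρ - M.Vd (π t) ρ) := by
          apply Finset.sum_le_sum
          intro t ht
          have := hVdmono t (le_of_lt (Finset.mem_range.mp ht))
          linarith
  have hmain : (T : ℝ) * (M.Vd πs ρ - M.Vd (π T) ρ)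
      ≤ Real.log (Fintype.card M.A) / η + 1 / (1 - M.γ) ^ 2 :=
    le_trans hlb hfinal
  rw [mul_comm] at hmain
  have := (le_div_iff₀ hTpos).mpr hmain
  calc M.Vd πs ρ - M.Vd (π T) ρ
      ≤ (Real.log (Fintype.card M.A) / η + 1 / (1 - M.γ) ^ 2) / T := this
    _ = Real.log (Fintype.card M.A) / (η * T) + 1 / ((1 - M.γ) ^ 2 * T) := by
        field_simp

end Lemmas
end FinMDP

/-- **Global convergence of natural policy gradient in the tabular case.** -/
theorem npg_tabular_global_convergence (M : FinMDP) (hM : M.Valid)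
    (η : ℝ) (hη : 0 < η)
    (π : ℕ → M.S → M.A → ℝ)
    (h0 : ∀ s a, π 0 s a = 1 / (Fintype.card M.A : ℝ))
    (hupd : ∀ t s a, π (t + 1) s a =
        π t s a * Real.exp (η * M.Adv (π t) s a / (1 - M.γ)) /
          ∑ a', π t s a' * Real.exp (η * M.Adv (π t) s a' / (1 - M.γ)))
    (ρ : M.S → ℝ) (hρ : IsDist ρ) (T : ℕ) (hT : 1 ≤ T) :
    (M.Vd (π T) ρ ≥
        (⨆ p : {p : M.S → M.A → ℝ // M.IsPolicy p}, M.Vd p.1 ρ) -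
          Real.log (Fintype.card M.A) / (η * T) - 1 / ((1 - M.γ) ^ 2 * T)) ∧
      (η ≥ (1 - M.γ) ^ 2 * Real.log (Fintype.card M.A) →
        ((⨆ p : {p : M.S → M.A → ℝ // M.IsPolicy p}, M.Vd p.1 ρ) - M.Vd (π T) ρ ≤
            2 / ((1 - M.γ) ^ 2 * T)) ∧
          ∀ ε : ℝ, 0 < ε → (T : ℝ) ≥ 2 / ((1 - M.γ) ^ 2 * ε) →
            (⨆ p : {p : M.S → M.A → ℝ // M.IsPolicy p}, M.Vd p.1 ρ) - M.Vd (π T) ρ ≤ ε) := by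
  have hγ1 := hM.2.2.2.2
  have h1γ : 0 < 1 - M.γ := by linarith
  have hTpos : (0 : ℝ) < T := by exact_mod_cast hT
  set Vstar := ⨆ p : {p : M.S → M.A → ℝ // M.IsPolicy p}, M.Vd p.1 ρ with hVstar_def
  set K : ℝ := (Fintype.card M.A : ℝ) with hK_def
  by_cases hA : Nonempty M.A
  · -- main case: the action space is nonempty
    have hKpos : (0 : ℝ) < K := by
      rw [hK_def]; exact_mod_cast Fintype.card_pos
    have hlogK0 : 0 ≤ Real.log K := Real.log_nonneg (by
      rw [hK_def]; exact_mod_cast Fintype.card_pos)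
    have hne : Nonempty {p : M.S → M.A → ℝ // M.IsPolicy p} := by
      refine ⟨⟨fun s a => 1 / K, fun s a => by positivity, fun s => ?_⟩⟩
      rw [Finset.sum_const, nsmul_eq_mul, Finset.card_univ, ← hK_def]
      field_simp
    have hsup : Vstar ≤ M.Vd (π T) ρ + Real.log K / (η * T) + 1 / ((1 - M.γ) ^ 2 * T) := by
      apply ciSup_le
      intro p
      have := FinMDP.master hM hη h0 hupd hρ hT hA p.2
      linarith
    constructor
    · linarith
    · intro hηK
      have h2 : Real.log K / (η * T) ≤ 1 / ((1 - M.γ) ^ 2 * T) := by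
        rw [div_le_div_iff₀ (by positivity) (by positivity)]
        nlinarith
      have hmain : Vstar - M.Vd (π T) ρ ≤ 2 / ((1 - M.γ) ^ 2 * T) := by
        have h3 : (2 : ℝ) / ((1 - M.γ) ^ 2 * T)
            = 1 / ((1 - M.γ) ^ 2 * T) + 1 / ((1 - M.γ) ^ 2 * T) := by ring
        linarith
      refine ⟨hmain, fun ε hε hTε => ?_⟩
      have h4 : (2 : ℝ) ≤ (T : ℝ) * ((1 - M.γ) ^ 2 * ε) := by
        rw [ge_iff_le, div_le_iff₀ (by positivity)] at hTε
        linarith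
      have h5 : (2 : ℝ) / ((1 - M.γ) ^ 2 * T) ≤ ε := by
        rw [div_le_iff₀ (by positivity)]
        nlinarith
      linarith
  · -- degenerate case: the action space is empty
    have hAe : IsEmpty M.A := not_nonempty_iff.mp hA
    have hV0 : ∀ (p : M.S → M.A → ℝ) (s : M.S), M.V p s = 0 := by
      intro p s
      have hr : M.rPol p = 0 := funext fun s' => by simp [FinMDP.rPol]
      have h1 : ∀ t : ℕ, ((M.Pmat p ^ t).mulVec (M.rPol p)) s = 0 := by
        intro t
        rw [hr, Matrix.mulVec_zero]
        rfl
      simp only [FinMDP.V, h1, mul_zero]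
      exact tsum_zero
    have hVd0 : ∀ p : M.S → M.A → ℝ, M.Vd p ρ = 0 := by
      intro p; simp [FinMDP.Vd, hV0]
    have hVstar0 : Vstar = 0 := by
      rw [hVstar_def]
      rcases isEmpty_or_nonempty {p : M.S → M.A → ℝ // M.IsPolicy p} with he | hne
      · exact Real.iSup_of_isEmpty _
      · have : (fun p : {p : M.S → M.A → ℝ // M.IsPolicy p} => M.Vd p.1 ρ)
            = fun _ => (0 : ℝ) := funext fun p => hVd0 p.1
        rw [this]
        exact ciSup_const
    have hK0 : K = 0 := by
      rw [hK_def]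
      simp [Fintype.card_eq_zero]
    have hpos1 : (0 : ℝ) ≤ 1 / ((1 - M.γ) ^ 2 * T) := by positivity
    have hpos2 : (0 : ℝ) ≤ 2 / ((1 - M.γ) ^ 2 * T) := by positivity
    rw [hVstar0, hVd0 (π T), hK0, Real.log_zero]
    refine ⟨by simp; positivity, fun _ => ⟨by simpa using hpos2, fun ε hε _ => by simpa using hε.le⟩⟩
end

section
/- (NPG regret lemma) Consider a finite discounted MDP and a parameterized policy class {π_θ : θ ∈ ℝ^d} of everywhere-positive stochastic policies such that, for each s and a, the map θ ↦ log π_θ(a|s) is differentiable with β-Lipschitz gradient (β-smooth). Fix a comparison policy π̃ and a state distribution ρ. Let θ^{(t+1)} = θ^{(t)} + η w^{(t)} with η > 0, where π_{θ^{(0)}}(·|s) is the uniform distribution for every s, and ‖w^{(t)}‖₂ ≤ W for every t. Writing π^{(t)} = π_{θ^{(t)}}, A^{(t)} = A^{π^{(t)}}, d̃ = d^{π̃}_ρ, and err_t = E_{s∼d̃} E_{a∼π̃(·|s)} [ A^{(t)}(s,a) − w^{(t)}·∇_θ log π^{(t)}(a|s) ], one has: min_{t<T} { V^{π̃}(ρ)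 − V^{π^{(t)}}(ρ) } ≤ (1/(1−γ)) · ( log|A|/(η T) + η β W²/2 + (1/T) Σ_{t=0}^{T−1} err_t ). -/
open scoped BigOperators InnerProductSpace

set_option maxHeartbeats 1000000


theorem descent_lemma {d : ℕ} (f : EuclideanSpace ℝ (Fin d) → ℝ) (β : ℝ) (hβ : 0 ≤ β)
    (hd : Differentiable ℝ f)
    (hs : ∀ x y, ‖gradient f x - gradient f y‖ ≤ β * ‖x - y‖)
    (x v : EuclideanSpace ℝ (Fin d)) :
    |f (x + v) - f x - ⟪gradient f x, v⟫_ℝ| ≤ β / 2 * ‖v‖ ^ 2 := by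

  have hgc : Continuous (fun z : EuclideanSpace ℝ (Fin d) => gradient f z) := by
    have : LipschitzWith ⟨β, hβ⟩ (fun z : EuclideanSpace ℝ (Fin d) => gradient f z) := by
      apply LipschitzWith.of_dist_le_mul
      intro a b
      simp only [dist_eq_norm]; exact hs a b
    exact this.continuous
  set φ : ℝ → ℝ := fun t => f (x + t • v) with hφ
  set D : ℝ → ℝ := fun t => ⟪gradient f (x + t • v), v⟫_ℝ with hD
  have hline : ∀ t : ℝ, HasDerivAt (fun t : ℝ => x + t • v) v t := by
    intro t
    simpa using ((hasDerivAt_id t).smul_const v).const_add x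
  have hderiv : ∀ t : ℝ, HasDerivAt φ (D t) t := by
    intro t
    have h1 : HasFDerivAt f ((InnerProductSpace.toDual ℝ (EuclideanSpace ℝ (Fin d))) (gradient f (x + t • v))) (x + t • v) :=
      (hd (x + t • v)).hasGradientAt.hasFDerivAt
    have := h1.comp_hasDerivAt t (hline t)
    simpa [hD, Function.comp_def, InnerProductSpace.toDual_apply_apply] using this
  have hDcont : Continuous D := by
    apply Continuous.inner
    · exact hgc.comp (continuous_const.add (continuous_id.smul continuous_const))
    · exact continuous_const
  have hint : ∀ a b : ℝ, IntervalIntegrable D MeasureTheory.volume a b :=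
    fun a b => hDcont.intervalIntegrable a b
  have hFTC : f (x + v) - f x = ∫ t in (0:ℝ)..1, D t := by
    have := intervalIntegral.integral_eq_sub_of_hasDerivAt
      (f := φ) (f' := D) (a := 0) (b := 1)
      (fun t _ => hderiv t) (hint 0 1)
    simp [hφ] at this
    rw [this]
  have hconst : ⟪gradient f x, v⟫_ℝ = ∫ t in (0:ℝ)..1, D 0 := by
    simp [hD]
  have key : f (x + v) - f x - ⟪gradient f x, v⟫_ℝ = ∫ t in (0:ℝ)..1, (D t - D 0) := by
    rw [hFTC, hconst, intervalIntegral.integral_sub (hint 0 1)]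
    exact intervalIntegrable_const
  rw [key]
  have habs : ∀ t ∈ Set.Icc (0:ℝ) 1, |D t - D 0| ≤ β * t * ‖v‖ ^ 2 := by
    intro t ht
    have h1 : D t - D 0 = ⟪gradient f (x + t • v) - gradient f x, v⟫_ℝ := by
      simp [hD, inner_sub_left]
    rw [h1]
    calc |⟪gradient f (x + t • v) - gradient f x, v⟫_ℝ|
        ≤ ‖gradient f (x + t • v) - gradient f x‖ * ‖v‖ := abs_real_inner_le_norm _ _
      _ ≤ (β * ‖(x + t • v) - x‖) * ‖v‖ := by
          have := hs (x + t • v) x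
          exact mul_le_mul_of_nonneg_right this (norm_nonneg _)
      _ = β * t * ‖v‖ ^ 2 := by
          have : ‖(x + t • v) - x‖ = t * ‖v‖ := by
            simp [norm_smul, abs_of_nonneg ht.1]
          rw [this]; ring
  calc |∫ t in (0:ℝ)..1, (D t - D 0)|
      ≤ ∫ t in (0:ℝ)..1, |D t - D 0| := by
        exact intervalIntegral.abs_integral_le_integral_abs zero_le_one
    _ ≤ ∫ t in (0:ℝ)..1, β * t * ‖v‖ ^ 2 := by
        apply intervalIntegral.integral_mono_on zero_le_one
        · exact ((hDcont.sub continuous_const).abs).intervalIntegrable 0 1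
        · exact (((continuous_const.mul continuous_id).mul continuous_const).intervalIntegrable 0 1)
        · exact habs
    _ = β / 2 * ‖v‖ ^ 2 := by
        have : ∫ t in (0:ℝ)..1, β * t * ‖v‖ ^ 2
            = (β * ‖v‖^2) * ∫ t in (0:ℝ)..1, t := by
          rw [← intervalIntegral.integral_const_mul]
          congr 1; ext t; ring
        rw [this, integral_id]; ring


namespace NPGAux
open FinMDP

variable {M : FinMDP}

lemma pmat_nonneg (hM : M.Valid) {p : M.S → M.A → ℝ} (hp : M.IsPolicy p)
    (s s' : M.S) : 0 ≤ M.Pmat p s s' := by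
  refine Finset.sum_nonneg fun a _ => mul_nonneg (hp.1 s a) (hM.1 s a s')

lemma pmat_row (hM : M.Valid) {p : M.S → M.A → ℝ} (hp : M.IsPolicy p)
    (s : M.S) : ∑ s', M.Pmat p s s' = 1 := by
  have : ∑ s', M.Pmat p s s' = ∑ a, p s a * ∑ s', M.P s a s' := by
    simp only [FinMDP.Pmat, Matrix.of_apply, Finset.mul_sum]
    rw [Finset.sum_comm]
  rw [this]
  simp only [hM.2.1, mul_one]
  exact hp.2 s

lemma matpow_nonneg (hM : M.Valid) {p : M.S → M.A → ℝ} (hp : M.IsPolicy p) :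
    ∀ (t : ℕ) (s s' : M.S), 0 ≤ (M.Pmat p ^ t) s s' := by
  intro t
  induction t with
  | zero =>
      intro s s'
      simp only [pow_zero, Matrix.one_apply]
      split <;> norm_num
  | succ t ih =>
      intro s s'
      rw [pow_succ, Matrix.mul_apply]
      exact Finset.sum_nonneg fun u _ => mul_nonneg (ih s u) (pmat_nonneg hM hp u s')

lemma pow_row (hM : M.Valid) {p : M.S → M.A → ℝ} (hp : M.IsPolicy p) :
    ∀ (t : ℕ) (s : M.S), ∑ s', (M.Pmat p ^ t) s s' = 1 := by
  intro t
  induction t with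
  | zero =>
      intro s
      simp [Matrix.one_apply]
  | succ t ih =>
      intro s
      simp only [pow_succ, Matrix.mul_apply]
      rw [Finset.sum_comm]
      calc ∑ u, ∑ s', (M.Pmat p ^ t) s u * M.Pmat p u s'
          = ∑ u, (M.Pmat p ^ t) s u * ∑ s', M.Pmat p u s' := by
            simp [Finset.mul_sum]
        _ = 1 := by
            simp only [pmat_row hM hp, mul_one]; exact ih s

lemma pow_le_one (hM : M.Valid) {p : M.S → M.A → ℝ} (hp : M.IsPolicy p)
    (t : ℕ) (s s' : M.S) : (M.Pmat p ^ t) s s' ≤ 1 := by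
  rw [← pow_row hM hp t s]
  exact Finset.single_le_sum (fun u _ => matpow_nonneg hM hp t s u) (Finset.mem_univ s')

lemma mulVec_bound (hM : M.Valid) {p : M.S → M.A → ℝ} (hp : M.IsPolicy p)
    (t : ℕ) {f : M.S → ℝ} {C : ℝ} (hf : ∀ s, |f s| ≤ C) (s : M.S) :
    |((M.Pmat p ^ t).mulVec f) s| ≤ C := by
  have h1 : ((M.Pmat p ^ t).mulVec f) s = ∑ s', (M.Pmat p ^ t) s s' * f s' := rfl
  rw [h1]
  calc |∑ s', (M.Pmat p ^ t) s s' * f s'|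
      ≤ ∑ s', |(M.Pmat p ^ t) s s' * f s'| := Finset.abs_sum_le_sum_abs _ _
    _ ≤ ∑ s', (M.Pmat p ^ t) s s' * C := by
        apply Finset.sum_le_sum
        intro s' _
        rw [abs_mul, abs_of_nonneg (matpow_nonneg hM hp t s s')]
        exact mul_le_mul_of_nonneg_left (hf s') (matpow_nonneg hM hp t s s')
    _ = C := by rw [← Finset.sum_mul, pow_row hM hp t s, one_mul]

lemma mulVec_nonneg (hM : M.Valid) {p : M.S → M.A → ℝ} (hp : M.IsPolicy p)
    (t : ℕ) {f : M.S → ℝ} (hf : ∀ s, 0 ≤ f s) (s : M.S) :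
    0 ≤ ((M.Pmat p ^ t).mulVec f) s :=
  Finset.sum_nonneg fun s' _ => mul_nonneg (matpow_nonneg hM hp t s s') (hf s')

lemma summable_geom_bound (hM : M.Valid) {u : ℕ → ℝ} {C : ℝ}
    (hu : ∀ t, |u t| ≤ C) : Summable (fun t => M.γ ^ t * u t) := by
  have hγ0 := hM.2.2.2.1
  have hγ1 := hM.2.2.2.2
  have hgeo : Summable (fun t : ℕ => C * M.γ ^ t) :=
    (summable_geometric_of_lt_one hγ0 hγ1).mul_left C
  refine Summable.of_norm_bounded hgeo fun t => ?_
  rw [Real.norm_eq_abs, abs_mul, abs_of_nonneg (pow_nonneg hγ0 t), mul_comm]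
  exact mul_le_mul_of_nonneg_right (hu t) (pow_nonneg hγ0 t)

lemma rPol_bound (hM : M.Valid) {p : M.S → M.A → ℝ} (hp : M.IsPolicy p) (s : M.S) :
    0 ≤ M.rPol p s ∧ M.rPol p s ≤ 1 := by
  refine ⟨Finset.sum_nonneg fun a _ => mul_nonneg (hp.1 s a) (hM.2.2.1 s a).1, ?_⟩
  have h1 : ∑ a, p s a * M.r s a ≤ ∑ a, p s a * 1 :=
    Finset.sum_le_sum fun a _ => mul_le_mul_of_nonneg_left (hM.2.2.1 s a).2 (hp.1 s a)
  simpa [FinMDP.rPol, hp.2 s] using h1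

lemma summable_V (hM : M.Valid) {p : M.S → M.A → ℝ} (hp : M.IsPolicy p) (s : M.S) :
    Summable (fun t => M.γ ^ t * ((M.Pmat p ^ t).mulVec (M.rPol p)) s) := by
  refine summable_geom_bound hM (C := 1) fun t => mulVec_bound hM hp t (fun s' => ?_) s
  rw [abs_of_nonneg (rPol_bound hM hp s').1]
  exact (rPol_bound hM hp s').2

lemma V_bound (hM : M.Valid) {p : M.S → M.A → ℝ} (hp : M.IsPolicy p) (s : M.S) :
    0 ≤ M.V p s ∧ M.V p s ≤ 1 / (1 - M.γ) := by
  have hγ0 := hM.2.2.2.1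
  have hγ1 := hM.2.2.2.2
  constructor
  · apply tsum_nonneg
    intro t
    exact mul_nonneg (pow_nonneg hγ0 t)
      (mulVec_nonneg hM hp t (fun s' => (rPol_bound hM hp s').1) s)
  · have h1 : M.V p s ≤ ∑' t : ℕ, M.γ ^ t := by
      apply Summable.tsum_le_tsum _ (summable_V hM hp s) (summable_geometric_of_lt_one hγ0 hγ1)
      intro t
      have hb := mulVec_bound hM hp t (C := 1)
        (fun s' => by rw [abs_of_nonneg (rPol_bound hM hp s').1]; exact (rPol_bound hM hp s').2) s
      nlinarith [abs_le.mp hb, pow_nonneg hγ0 t]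
    rwa [tsum_geometric_of_lt_one hγ0 hγ1, ← one_div] at h1

lemma V_abs_bound (hM : M.Valid) {p : M.S → M.A → ℝ} (hp : M.IsPolicy p) (s : M.S) :
    |M.V p s| ≤ 1 / (1 - M.γ) := by
  rw [abs_of_nonneg (V_bound hM hp s).1]
  exact (V_bound hM hp s).2

end NPGAux

namespace NPGAux
open FinMDP

variable {M : FinMDP}

lemma tsum_telescope' {a : ℕ → ℝ} (h : Summable (fun t => a (t + 1) - a t))
    (h0 : Filter.Tendsto a Filter.atTop (nhds 0)) :
    ∑' t, (a (t + 1) - a t) = -a 0 := by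
  obtain ⟨L, hL⟩ := h
  have h1 := hL.tendsto_sum_nat
  have h2 : (fun n => ∑ i ∈ Finset.range n, (a (i + 1) - a i)) = fun n => a n - a 0 := by
    funext n; exact Finset.sum_range_sub a n
  rw [h2] at h1
  have h3 : Filter.Tendsto (fun n => a n - a 0) Filter.atTop (nhds (0 - a 0)) :=
    h0.sub tendsto_const_nhds
  have h4 : L = 0 - a 0 := tendsto_nhds_unique h1 h3
  rw [hL.tsum_eq, h4, zero_sub]

/-- The "Bellman residual" of `p` averaged by `q`. -/
noncomputable def gfun (M : FinMDP) (p q : M.S → M.A → ℝ) (s : M.S) : ℝ :=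
  M.rPol q s + M.γ * ((M.Pmat q).mulVec (M.V p)) s - M.V p s

lemma gfun_abs_bound (hM : M.Valid) {p q : M.S → M.A → ℝ} (hp : M.IsPolicy p)
    (hq : M.IsPolicy q) (s : M.S) : |gfun M p q s| ≤ 1 + 2 / (1 - M.γ) := by
  have hγ0 := hM.2.2.2.1
  have hγ1 := hM.2.2.2.2
  have h1 : |M.rPol q s| ≤ 1 := by
    rw [abs_of_nonneg (rPol_bound hM hq s).1]; exact (rPol_bound hM hq s).2
  have h2 : |((M.Pmat q).mulVec (M.V p)) s| ≤ 1 / (1 - M.γ) := by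
    have := mulVec_bound hM hq 1 (f := M.V p) (C := 1 / (1 - M.γ))
      (fun s' => V_abs_bound hM hp s') s
    simpa using this
  have h3 := V_abs_bound hM hp s
  have h4 : |M.γ * ((M.Pmat q).mulVec (M.V p)) s| ≤ 1 / (1 - M.γ) := by
    rw [abs_mul, abs_of_nonneg hγ0]
    calc M.γ * |((M.Pmat q).mulVec (M.V p)) s| ≤ 1 * (1 / (1 - M.γ)) := by
          apply mul_le_mul hγ1.le h2 (abs_nonneg _) zero_le_one
      _ = 1 / (1 - M.γ) := one_mul _
  calc |gfun M p q s| ≤ |M.rPol q s| + |M.γ * ((M.Pmat q).mulVec (M.V p)) s| + |M.V p s| := by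
        unfold gfun; exact (abs_sub _ _).trans (by gcongr; exact abs_add_le _ _)
    _ ≤ 1 + 2 / (1 - M.γ) := by
        have : 1 / (1 - M.γ) + 1 / (1 - M.γ) = 2 / (1 - M.γ) := by ring
        linarith

lemma key_identity (hM : M.Valid) {p q : M.S → M.A → ℝ} (hp : M.IsPolicy p)
    (hq : M.IsPolicy q) (s₀ : M.S) :
    ∑' t : ℕ, M.γ ^ t * ((M.Pmat q ^ t).mulVec (gfun M p q)) s₀
      = M.V q s₀ - M.V p s₀ := by
  have hγ0 := hM.2.2.2.1
  have hγ1 := hM.2.2.2.2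
  set a : ℕ → ℝ := fun t => M.γ ^ t * ((M.Pmat q ^ t).mulVec (M.V p)) s₀ with ha
  have hpt : ∀ t : ℕ, M.γ ^ t * ((M.Pmat q ^ t).mulVec (gfun M p q)) s₀
      = M.γ ^ t * ((M.Pmat q ^ t).mulVec (M.rPol q)) s₀ + (a (t + 1) - a t) := by
    intro t
    have hmid : ∑ s', (M.Pmat q ^ t) s₀ s' * ((M.Pmat q).mulVec (M.V p)) s'
        = ((M.Pmat q ^ (t + 1)).mulVec (M.V p)) s₀ := by
      have h5 : (M.Pmat q ^ t).mulVec ((M.Pmat q).mulVec (M.V p))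
          = (M.Pmat q ^ t * M.Pmat q).mulVec (M.V p) := Matrix.mulVec_mulVec _ _ _
      rw [← pow_succ] at h5
      rw [← h5]
      rfl
    have hmv : ∀ (A : Matrix M.S M.S ℝ) (v : M.S → ℝ) (s : M.S),
        A.mulVec v s = ∑ s', A s s' * v s' := fun A v s => rfl
    have hexp : ((M.Pmat q ^ t).mulVec (gfun M p q)) s₀
        = ((M.Pmat q ^ t).mulVec (M.rPol q)) s₀
          + M.γ * ((M.Pmat q ^ (t + 1)).mulVec (M.V p)) s₀
          - ((M.Pmat q ^ t).mulVec (M.V p)) s₀ := by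
      unfold gfun
      simp only [hmv] at hmid ⊢
      rw [← hmid, Finset.mul_sum]
      rw [← Finset.sum_add_distrib, ← Finset.sum_sub_distrib]
      apply Finset.sum_congr rfl
      intro s' _
      ring
    rw [hexp, ha]
    simp only [pow_succ]
    ring
  rw [funext hpt]
  have hsum1 : Summable (fun t => M.γ ^ t * ((M.Pmat q ^ t).mulVec (M.rPol q)) s₀) :=
    summable_V hM hq s₀
  have habs : ∀ t, |a t| ≤ (1 / (1 - M.γ)) * M.γ ^ t := by
    intro t
    rw [ha]
    simp only [abs_mul, abs_of_nonneg (pow_nonneg hγ0 t)]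
    rw [mul_comm]
    apply mul_le_mul_of_nonneg_right _ (pow_nonneg hγ0 t)
    exact mulVec_bound hM hq t (fun s' => V_abs_bound hM hp s') s₀
  have hsum2 : Summable (fun t => a (t + 1) - a t) := by
    apply Summable.sub
    · have : Summable (fun t : ℕ => (1 / (1 - M.γ)) * M.γ ^ (t + 1)) := by
        have h := (summable_geometric_of_lt_one hγ0 hγ1).mul_left ((1 / (1 - M.γ)) * M.γ)
        refine h.congr fun t => ?_
        rw [pow_succ]; ring
      refine Summable.of_norm_bounded this fun t => ?_
      rw [Real.norm_eq_abs]; exact habs (t + 1)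
    · refine Summable.of_norm_bounded
        ((summable_geometric_of_lt_one hγ0 hγ1).mul_left (1 / (1 - M.γ))) fun t => ?_
      rw [Real.norm_eq_abs]; exact habs t
  rw [Summable.tsum_add hsum1 hsum2]
  have htend : Filter.Tendsto a Filter.atTop (nhds 0) := by
    apply squeeze_zero_norm (fun t => habs t)
    have := tendsto_pow_atTop_nhds_zero_of_lt_one hγ0 hγ1
    simpa using this.const_mul (1 / (1 - M.γ))
  rw [tsum_telescope' hsum2 htend]
  have ha0 : a 0 = M.V p s₀ := by
    rw [ha]
    simp [Matrix.one_mulVec]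
  rw [ha0]
  rfl

end NPGAux

namespace NPGAux
open FinMDP

variable {M : FinMDP}

lemma adv_sum {p q : M.S → M.A → ℝ} (hq : M.IsPolicy q) (s : M.S) :
    ∑ a, q s a * M.Adv p s a = gfun M p q s := by
  unfold FinMDP.Adv FinMDP.Qf gfun FinMDP.rPol
  have hmv : ((M.Pmat q).mulVec (M.V p)) s = ∑ s', (∑ a, q s a * M.P s a s') * M.V p s' := rfl
  rw [hmv]
  have h1 : ∑ a, q s a * (M.r s a + M.γ * ∑ s', M.P s a s' * M.V p s' - M.V p s)
      = ∑ a, (q s a * M.r s a + M.γ * (q s a * ∑ s', M.P s a s' * M.V p s') - q s a * M.V p s) :=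
    Finset.sum_congr rfl fun a _ => by ring
  rw [h1, Finset.sum_sub_distrib, Finset.sum_add_distrib, ← Finset.mul_sum, ← Finset.sum_mul,
    hq.2 s, one_mul]
  congr 2
  have h2 : ∀ a, q s a * ∑ s', M.P s a s' * M.V p s'
      = ∑ s', q s a * M.P s a s' * M.V p s' := by
    intro a
    rw [Finset.mul_sum]
    exact Finset.sum_congr rfl fun _ _ => by ring
  simp only [h2]
  rw [Finset.sum_comm]
  congr 1
  exact Finset.sum_congr rfl fun s' _ => by rw [Finset.sum_mul]

lemma summable_dvisit (hM : M.Valid) {q : M.S → M.A → ℝ} (hq : M.IsPolicy q)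
    (s₀ s : M.S) : Summable (fun t => M.γ ^ t * (M.Pmat q ^ t) s₀ s) :=
  summable_geom_bound hM (C := 1) fun t => by
    rw [abs_of_nonneg (matpow_nonneg hM hq t s₀ s)]
    exact pow_le_one hM hq t s₀ s

lemma dvisit_nonneg (hM : M.Valid) {q : M.S → M.A → ℝ} (hq : M.IsPolicy q)
    (s₀ s : M.S) : 0 ≤ M.dvisit q s₀ s := by
  have hγ1 := hM.2.2.2.2
  apply mul_nonneg (by linarith)
  exact tsum_nonneg fun t => mul_nonneg (pow_nonneg hM.2.2.2.1 t) (matpow_nonneg hM hq t s₀ s)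

lemma dvisit_sum (hM : M.Valid) {q : M.S → M.A → ℝ} (hq : M.IsPolicy q) (s₀ : M.S) :
    ∑ s, M.dvisit q s₀ s = 1 := by
  have hγ0 := hM.2.2.2.1
  have hγ1 := hM.2.2.2.2
  unfold FinMDP.dvisit
  rw [← Finset.mul_sum]
  rw [← Summable.tsum_finsetSum (fun s _ => summable_dvisit hM hq s₀ s)]
  have h1 : ∀ t : ℕ, ∑ s, M.γ ^ t * (M.Pmat q ^ t) s₀ s = M.γ ^ t := by
    intro t
    rw [← Finset.mul_sum, pow_row hM hq t s₀, mul_one]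
  rw [tsum_congr h1, tsum_geometric_of_lt_one hγ0 hγ1]
  exact mul_inv_cancel₀ (by linarith)

lemma dvisitD_nonneg (hM : M.Valid) {q : M.S → M.A → ℝ} (hq : M.IsPolicy q)
    {ρ : M.S → ℝ} (hρ : IsDist ρ) (s : M.S) : 0 ≤ M.dvisitD q ρ s :=
  Finset.sum_nonneg fun s₀ _ => mul_nonneg (hρ.1 s₀) (dvisit_nonneg hM hq s₀ s)

lemma dvisitD_sum (hM : M.Valid) {q : M.S → M.A → ℝ} (hq : M.IsPolicy q)
    {ρ : M.S → ℝ} (hρ : IsDist ρ) : ∑ s, M.dvisitD q ρ s = 1 := by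
  unfold FinMDP.dvisitD
  rw [Finset.sum_comm]
  have : ∀ s₀ : M.S, ∑ s, ρ s₀ * M.dvisit q s₀ s = ρ s₀ := by
    intro s₀
    rw [← Finset.mul_sum, dvisit_sum hM hq s₀, mul_one]
  simp only [this]
  exact hρ.2

/-- Performance difference lemma. -/
lemma pdl (hM : M.Valid) {p q : M.S → M.A → ℝ} (hp : M.IsPolicy p) (hq : M.IsPolicy q)
    {ρ : M.S → ℝ} (hρ : IsDist ρ) :
    (1 - M.γ) * (M.Vd q ρ - M.Vd p ρ) = ∑ s, M.dvisitD q ρ s * ∑ a, q s a * M.Adv p s a := by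
  have hγ0 := hM.2.2.2.1
  have hγ1 := hM.2.2.2.2
  have hg := gfun_abs_bound hM hp hq
  have hrhs : ∀ s, ∑ a, q s a * M.Adv p s a = gfun M p q s := fun s => adv_sum hq s
  simp only [hrhs]
  unfold FinMDP.dvisitD FinMDP.dvisit
  have h1 : ∀ s₀ : M.S, ∑ s, ((1 - M.γ) * ∑' t : ℕ, M.γ ^ t * (M.Pmat q ^ t) s₀ s) * gfun M p q s
      = (1 - M.γ) * (M.V q s₀ - M.V p s₀) := by
    intro s₀
    have h2 : ∀ s, ((1 - M.γ) * ∑' t : ℕ, M.γ ^ t * (M.Pmat q ^ t) s₀ s) * gfun M p q s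
        = (1 - M.γ) * ∑' t : ℕ, M.γ ^ t * (M.Pmat q ^ t) s₀ s * gfun M p q s := by
      intro s
      rw [tsum_mul_right]
      ring
    simp only [h2]
    rw [← Finset.mul_sum]
    congr 1
    have hsumm : ∀ s : M.S, Summable (fun t => M.γ ^ t * (M.Pmat q ^ t) s₀ s * gfun M p q s) := by
      intro s
      have := (summable_dvisit hM hq s₀ s).mul_right (gfun M p q s)
      simpa using this
    rw [← Summable.tsum_finsetSum (fun s _ => hsumm s)]
    rw [← key_identity hM hp hq s₀]
    apply tsum_congr
    intro t
    have : ((M.Pmat q ^ t).mulVec (gfun M p q)) s₀ = ∑ s, (M.Pmat q ^ t) s₀ s * gfun M p q s := rfl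
    rw [this, Finset.mul_sum]
    apply Finset.sum_congr rfl
    intro s _
    ring
  have h3 : ∀ s₀ : M.S, ∑ s, (ρ s₀ * ((1 - M.γ) * ∑' t : ℕ, M.γ ^ t * (M.Pmat q ^ t) s₀ s)) * gfun M p q s
      = ρ s₀ * ((1 - M.γ) * (M.V q s₀ - M.V p s₀)) := by
    intro s₀
    rw [← h1 s₀, Finset.mul_sum]
    apply Finset.sum_congr rfl
    intro s _
    ring
  have hR : ∑ s, (∑ s₀, ρ s₀ * ((1 - M.γ) * ∑' t : ℕ, M.γ ^ t * (M.Pmat q ^ t) s₀ s)) * gfun M p q s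
      = (1 - M.γ) * (M.Vd q ρ - M.Vd p ρ) := by
    calc ∑ s, (∑ s₀, ρ s₀ * ((1 - M.γ) * ∑' t : ℕ, M.γ ^ t * (M.Pmat q ^ t) s₀ s)) * gfun M p q s
        = ∑ s, ∑ s₀, (ρ s₀ * ((1 - M.γ) * ∑' t : ℕ, M.γ ^ t * (M.Pmat q ^ t) s₀ s)) * gfun M p q s := by
          simp only [Finset.sum_mul]
      _ = ∑ s₀, ∑ s, (ρ s₀ * ((1 - M.γ) * ∑' t : ℕ, M.γ ^ t * (M.Pmat q ^ t) s₀ s)) * gfun M p q s :=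
          Finset.sum_comm
      _ = ∑ s₀, ρ s₀ * ((1 - M.γ) * (M.V q s₀ - M.V p s₀)) :=
          Finset.sum_congr rfl fun s₀ _ => h3 s₀
      _ = (1 - M.γ) * (M.Vd q ρ - M.Vd p ρ) := by
          unfold FinMDP.Vd
          rw [← Finset.sum_sub_distrib, Finset.mul_sum]
          apply Finset.sum_congr rfl
          intro s₀ _
          ring
  exact hR.symm

end NPGAux

namespace NPGAux

lemma kl_nonneg {A : Type*} [Fintype A] {p q : A → ℝ} (hp : IsDist p) (hq : IsDist q)
    (hqpos : ∀ a, 0 < q a) :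
    0 ≤ ∑ a, p a * (Real.log (p a) - Real.log (q a)) := by
  have h : ∀ a, p a * (Real.log (q a) - Real.log (p a)) ≤ q a - p a := by
    intro a
    rcases eq_or_lt_of_le (hp.1 a) with h0 | h0
    · rw [← h0]; simpa using (hqpos a).le
    · have hlog : Real.log (q a) - Real.log (p a) = Real.log (q a / p a) :=
        (Real.log_div (hqpos a).ne' h0.ne').symm
      rw [hlog]
      have h1 : Real.log (q a / p a) ≤ q a / p a - 1 :=
        Real.log_le_sub_one_of_pos (div_pos (hqpos a) h0)
      have h2 : p a * Real.log (q a / p a) ≤ p a * (q a / p a - 1) :=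
        mul_le_mul_of_nonneg_left h1 h0.le
      have h3 : p a * (q a / p a - 1) = q a - p a := by
        field_simp
      linarith
  have hsum : ∑ a, p a * (Real.log (q a) - Real.log (p a)) ≤ 0 := by
    calc ∑ a, p a * (Real.log (q a) - Real.log (p a)) ≤ ∑ a, (q a - p a) :=
          Finset.sum_le_sum fun a _ => h a
      _ = 0 := by rw [Finset.sum_sub_distrib, hp.2, hq.2, sub_self]
  have : ∑ a, p a * (Real.log (p a) - Real.log (q a))
      = -∑ a, p a * (Real.log (q a) - Real.log (p a)) := by
    rw [← Finset.sum_neg_distrib]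
    exact Finset.sum_congr rfl fun a _ => by ring
  rw [this]
  linarith

lemma kl_uniform_le {A : Type*} [Fintype A] {p : A → ℝ} (hp : IsDist p)
    (hcard : 0 < Fintype.card A) :
    ∑ a, p a * (Real.log (p a) - Real.log (1 / (Fintype.card A : ℝ)))
      ≤ Real.log (Fintype.card A) := by
  have hcr : (0:ℝ) < (Fintype.card A : ℝ) := by exact_mod_cast hcard
  have hlu : Real.log (1 / (Fintype.card A : ℝ)) = -Real.log (Fintype.card A) := by
    rw [one_div, Real.log_inv]
  have hple : ∀ a, p a ≤ 1 := by
    intro a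
    rw [← hp.2]
    exact Finset.single_le_sum (fun a _ => hp.1 a) (Finset.mem_univ a)
  have hterm : ∀ a, p a * Real.log (p a) ≤ 0 := by
    intro a
    rcases eq_or_lt_of_le (hp.1 a) with h0 | h0
    · rw [← h0]; simp
    · exact mul_nonpos_of_nonneg_of_nonpos h0.le (Real.log_nonpos h0.le (hple a))
  calc ∑ a, p a * (Real.log (p a) - Real.log (1 / (Fintype.card A : ℝ)))
      = (∑ a, p a * Real.log (p a)) + (∑ a, p a) * Real.log (Fintype.card A) := by
        rw [hlu, Finset.sum_mul, ← Finset.sum_add_distrib]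
        exact Finset.sum_congr rfl fun a _ => by ring
    _ ≤ 0 + 1 * Real.log (Fintype.card A) := by
        rw [hp.2]
        have := Finset.sum_nonpos (fun a (_ : a ∈ Finset.univ) => hterm a)
        linarith
    _ = Real.log (Fintype.card A) := by ring

lemma avg_bound {S A : Type*} [Fintype S] [Fintype A] (d : S → ℝ) (p : S → A → ℝ)
    (F G : S → A → ℝ) (c : ℝ) (hd : ∀ s, 0 ≤ d s) (hd1 : ∑ s, d s = 1)
    (hp : ∀ s a, 0 ≤ p s a) (hp1 : ∀ s, ∑ a, p s a = 1)
    (h : ∀ s a, G s a - c ≤ F s a) :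
    (∑ s, d s * ∑ a, p s a * G s a) - c ≤ ∑ s, d s * ∑ a, p s a * F s a := by
  have hs : ∀ s, (∑ a, p s a * G s a) - c ≤ ∑ a, p s a * F s a := by
    intro s
    have h1 : ∑ a, (p s a * G s a - p s a * c) ≤ ∑ a, p s a * F s a := by
      apply Finset.sum_le_sum
      intro a _
      nlinarith [h s a, hp s a]
    rw [Finset.sum_sub_distrib, ← Finset.sum_mul, hp1 s, one_mul] at h1
    exact h1
  calc (∑ s, d s * ∑ a, p s a * G s a) - c
      = ∑ s, (d s * ∑ a, p s a * G s a - d s * c) := by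
        rw [Finset.sum_sub_distrib, ← Finset.sum_mul, hd1, one_mul]
    _ ≤ ∑ s, d s * ∑ a, p s a * F s a := by
        apply Finset.sum_le_sum
        intro s _
        nlinarith [hs s, hd s]

end NPGAux

open NPGAux



/-- **NPG regret lemma.** -/
theorem npg_regret_lemma (M : FinMDP) (hM : M.Valid) (d : ℕ)
    (π : EuclideanSpace ℝ (Fin d) → M.S → M.A → ℝ)
    (hpolicy : ∀ ϑ, M.IsPolicy (π ϑ)) (hpospol : ∀ ϑ s a, 0 < π ϑ s a)
    (β : ℝ) (hβ : 0 ≤ β)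
    (hdiff : ∀ s a, Differentiable ℝ (fun ϑ : EuclideanSpace ℝ (Fin d) =>
        Real.log (π ϑ s a)))
    (hsmooth : ∀ (s : M.S) (a : M.A) (ϑ ϑ' : EuclideanSpace ℝ (Fin d)),
        ‖gradient (fun ϑ'' => Real.log (π ϑ'' s a)) ϑ -
            gradient (fun ϑ'' => Real.log (π ϑ'' s a)) ϑ'‖ ≤ β * ‖ϑ - ϑ'‖)
    -- the comparison policy `π̃` and starting state distribution `ρ`
    (πtil : M.S → M.A → ℝ) (hπtil : M.IsPolicy πtil)
    (ρ : M.S → ℝ) (hρ : IsDist ρ)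
    (η W : ℝ) (hη : 0 < η)
    (θ w : ℕ → EuclideanSpace ℝ (Fin d))
    (h0 : ∀ s a, π (θ 0) s a = 1 / (Fintype.card M.A : ℝ))
    (hupd : ∀ t, θ (t + 1) = θ t + η • w t)
    (hW : ∀ t, ‖w t‖ ≤ W)
    (err : ℕ → ℝ)
    (herr : ∀ t, err t = ∑ s, M.dvisitD πtil ρ s * ∑ a, πtil s a *
        (M.Adv (π (θ t)) s a -
          ⟪w t, gradient (fun ϑ => Real.log (π ϑ s a)) (θ t)⟫_ℝ))
    (T : ℕ) (hT : 0 < T) :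
    ∃ t < T, M.Vd πtil ρ - M.Vd (π (θ t)) ρ ≤
      (1 / (1 - M.γ)) * (Real.log (Fintype.card M.A) / (η * T) +
        η * β * W ^ 2 / 2 + (1 / T) * ∑ t ∈ Finset.range T, err t) := by
  classical
  have hγ0 := hM.2.2.2.1
  have hγ1 := hM.2.2.2.2
  have h1γ : (0:ℝ) < 1 - M.γ := by linarith
  -- nonemptiness
  have hSne : Nonempty M.S := by
    by_contra h
    rw [not_nonempty_iff] at h
    have h2 := hρ.2
    rw [Finset.univ_eq_empty, Finset.sum_empty] at h2
    norm_num at h2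
  obtain ⟨sst⟩ := hSne
  have hAne : Nonempty M.A := by
    by_contra h
    rw [not_nonempty_iff] at h
    have h2 := (hpolicy (θ 0)).2 sst
    rw [Finset.univ_eq_empty, Finset.sum_empty] at h2
    norm_num at h2
  have hcard : 0 < Fintype.card M.A := Fintype.card_pos
  have hW0 : 0 ≤ W := le_trans (norm_nonneg _) (hW 0)
  set dt : M.S → ℝ := fun s => M.dvisitD πtil ρ s with hdt
  have hdt0 : ∀ s, 0 ≤ dt s := fun s => dvisitD_nonneg hM hπtil hρ s
  have hdt1 : ∑ s, dt s = 1 := dvisitD_sum hM hπtil hρ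
  set grad : ℕ → M.S → M.A → EuclideanSpace ℝ (Fin d) :=
    fun t s a => gradient (fun ϑ => Real.log (π ϑ s a)) (θ t) with hgrad
  set c : ℝ := η ^ 2 * β * W ^ 2 / 2 with hc
  have hc0 : 0 ≤ c := by positivity
  -- smoothness step
  have hstep : ∀ (t : ℕ) (s : M.S) (a : M.A),
      η * ⟪w t, grad t s a⟫_ℝ - c
        ≤ Real.log (π (θ (t + 1)) s a) - Real.log (π (θ t) s a) := by
    intro t s a
    have hdl := descent_lemma (fun ϑ => Real.log (π ϑ s a)) β hβ (hdiff s a)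
      (hsmooth s a) (θ t) (η • w t)
    rw [← hupd t] at hdl
    have h1 : ⟪grad t s a, η • w t⟫_ℝ = η * ⟪w t, grad t s a⟫_ℝ := by
      rw [real_inner_smul_right, real_inner_comm]
    have h2 : ‖η • w t‖ ^ 2 ≤ η ^ 2 * W ^ 2 := by
      rw [norm_smul, Real.norm_eq_abs, abs_of_pos hη, mul_pow]
      have h5 : ‖w t‖ ^ 2 ≤ W ^ 2 := by nlinarith [norm_nonneg (w t), hW t]
      exact mul_le_mul_of_nonneg_left h5 (by positivity)
    have h3 := abs_le.mp hdl
    have h4 : β / 2 * ‖η • w t‖ ^ 2 ≤ c := by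
      rw [hc]
      nlinarith
    rw [h1] at h3
    linarith [h3.1]
  -- the potential function
  set Φ : ℕ → ℝ := fun t => ∑ s, dt s * ∑ a, πtil s a *
    (Real.log (πtil s a) - Real.log (π (θ t) s a)) with hΦ
  have hΦnn : ∀ t, 0 ≤ Φ t := by
    intro t
    apply Finset.sum_nonneg
    intro s _
    apply mul_nonneg (hdt0 s)
    exact kl_nonneg ⟨fun a => hπtil.1 s a, hπtil.2 s⟩
      ⟨fun a => (hpolicy (θ t)).1 s a, (hpolicy (θ t)).2 s⟩ (fun a => hpospol (θ t) s a)
  have hΦ0 : Φ 0 ≤ Real.log (Fintype.card M.A) := by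
    calc Φ 0 ≤ ∑ s, dt s * Real.log (Fintype.card M.A) := by
          apply Finset.sum_le_sum
          intro s _
          apply mul_le_mul_of_nonneg_left _ (hdt0 s)
          have := kl_uniform_le (A := M.A) ⟨fun a => hπtil.1 s a, hπtil.2 s⟩ hcard
          simpa only [h0 s] using this
      _ = Real.log (Fintype.card M.A) := by rw [← Finset.sum_mul, hdt1, one_mul]
  -- per-step inequality
  have hkey : ∀ t, η * ((1 - M.γ) * (M.Vd πtil ρ - M.Vd (π (θ t)) ρ))
      ≤ (Φ t - Φ (t + 1)) + η * err t + c := by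
    intro t
    have hsplit : Φ t - Φ (t + 1) = ∑ s, dt s * ∑ a, πtil s a *
        (Real.log (π (θ (t + 1)) s a) - Real.log (π (θ t) s a)) := by
      rw [hΦ]
      rw [← Finset.sum_sub_distrib]
      apply Finset.sum_congr rfl
      intro s _
      rw [← mul_sub, ← Finset.sum_sub_distrib]
      congr 1
      apply Finset.sum_congr rfl
      intro a _
      ring
    have hlow : (∑ s, dt s * ∑ a, πtil s a * (η * ⟪w t, grad t s a⟫_ℝ)) - c
        ≤ Φ t - Φ (t + 1) := by
      rw [hsplit]
      exact avg_bound dt πtil _ _ c hdt0 hdt1 (fun s a => hπtil.1 s a) hπtil.2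
        (fun s a => hstep t s a)
    have hpull : ∑ s, dt s * ∑ a, πtil s a * (η * ⟪w t, grad t s a⟫_ℝ)
        = η * ∑ s, dt s * ∑ a, πtil s a * ⟪w t, grad t s a⟫_ℝ := by
      rw [Finset.mul_sum]
      apply Finset.sum_congr rfl
      intro s _
      rw [Finset.mul_sum, Finset.mul_sum, Finset.mul_sum]
      apply Finset.sum_congr rfl
      intro a _
      ring
    have herr2 : ∑ s, dt s * ∑ a, πtil s a * ⟪w t, grad t s a⟫_ℝ
        = (∑ s, dt s * ∑ a, πtil s a * M.Adv (π (θ t)) s a) - err t := by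
      rw [herr t, ← Finset.sum_sub_distrib]
      apply Finset.sum_congr rfl
      intro s _
      rw [← mul_sub, ← Finset.sum_sub_distrib]
      congr 1
      apply Finset.sum_congr rfl
      intro a _
      ring
    have hpdl : ∑ s, dt s * ∑ a, πtil s a * M.Adv (π (θ t)) s a
        = (1 - M.γ) * (M.Vd πtil ρ - M.Vd (π (θ t)) ρ) :=
      (pdl hM (hpolicy (θ t)) hπtil hρ).symm
    rw [hpull, herr2, hpdl] at hlow
    linarith
  -- summing over t
  set u : ℕ → ℝ := fun t => M.Vd πtil ρ - M.Vd (π (θ t)) ρ with hu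
  have hsum : η * ((1 - M.γ) * ∑ t ∈ Finset.range T, u t)
      ≤ Real.log (Fintype.card M.A) + η * (∑ t ∈ Finset.range T, err t) + T * c := by
    have h1 : ∑ t ∈ Finset.range T, (η * ((1 - M.γ) * u t))
        ≤ ∑ t ∈ Finset.range T, ((Φ t - Φ (t + 1)) + η * err t + c) :=
      Finset.sum_le_sum fun t _ => hkey t
    rw [Finset.sum_add_distrib, Finset.sum_add_distrib, Finset.sum_range_sub' Φ,
      Finset.sum_const, Finset.card_range, nsmul_eq_mul] at h1
    have h3 : ∑ t ∈ Finset.range T, (η * ((1 - M.γ) * u t))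
        = η * ((1 - M.γ) * ∑ t ∈ Finset.range T, u t) := by
      rw [Finset.mul_sum, Finset.mul_sum]
    have h4 : ∑ t ∈ Finset.range T, η * err t = η * ∑ t ∈ Finset.range T, err t :=
      (Finset.mul_sum _ _ _).symm
    rw [h3, h4] at h1
    have h2 := hΦnn T
    linarith
  -- pick the minimizer
  obtain ⟨t₀, ht₀mem, ht₀min⟩ := Finset.exists_min_image (Finset.range T) u
    ⟨0, Finset.mem_range.mpr hT⟩
  refine ⟨t₀, Finset.mem_range.mp ht₀mem, ?_⟩
  have hTpos : (0:ℝ) < (T:ℝ) := by exact_mod_cast hT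
  have hmin : (T:ℝ) * u t₀ ≤ ∑ t ∈ Finset.range T, u t := by
    have h1 : ∑ t ∈ Finset.range T, u t₀ ≤ ∑ t ∈ Finset.range T, u t :=
      Finset.sum_le_sum fun t ht => ht₀min t ht
    rw [Finset.sum_const, Finset.card_range, nsmul_eq_mul] at h1
    exact h1
  have hfinal : η * ((1 - M.γ) * ((T:ℝ) * u t₀))
      ≤ Real.log (Fintype.card M.A) + η * (∑ t ∈ Finset.range T, err t) + T * c := by
    have := mul_le_mul_of_nonneg_left (mul_le_mul_of_nonneg_left hmin h1γ.le) hη.le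
    linarith
  have hrhs : Real.log (Fintype.card M.A) + η * (∑ t ∈ Finset.range T, err t) + T * c
      = ((T:ℝ) * (η * (1 - M.γ))) *
        ((1 / (1 - M.γ)) * (Real.log (Fintype.card M.A) / (η * T) +
          η * β * W ^ 2 / 2 + (1 / T) * ∑ t ∈ Finset.range T, err t)) := by
    rw [hc]
    field_simp
    ring
  rw [hrhs] at hfinal
  have hpos : (0:ℝ) < (T:ℝ) * (η * (1 - M.γ)) := by positivity
  have h2 : η * ((1 - M.γ) * ((T:ℝ) * u t₀))
      = ((T:ℝ) * (η * (1 - M.γ))) * u t₀ := by ring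
  rw [h2] at hfinal
  exact le_of_mul_le_mul_left hfinal hpos
end

section
/- (A universal measure achieving relative condition number at most d) Let Φ ⊂ ℝ^d be a nonempty compact set of feature vectors. Then there exists a probability measure ν supported on at most d² points of Φ such that for every probability measure μ supported on Φ and every w ∈ ℝ^d: wᵀ E_{φ∼μ}[φφᵀ] w ≤ d · wᵀ E_{φ∼ν}[φφᵀ] w. In particular, the relative condition number κ = sup_w (wᵀΣ_μ w)/(wᵀΣ_ν w) is at most d. -/
open scoped BigOperators InnerProductSpace
open MeasureTheory Matrix Polynomial Filter Set

section UMCNaux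

variable {d : ℕ}

/-- rank-one matrix `x xᵀ` -/
noncomputable def UMfm (x : EuclideanSpace ℝ (Fin d)) : Matrix (Fin d) (Fin d) ℝ :=
  Matrix.vecMulVec x x

/-- quadratic form `M ↦ wᵀ M w` as a linear map in `M` -/
noncomputable def UMqf (w : EuclideanSpace ℝ (Fin d)) :
    Matrix (Fin d) (Fin d) ℝ →ₗ[ℝ] ℝ where
  toFun M := w ⬝ᵥ (M *ᵥ w)
  map_add' A B := by simp [Matrix.add_mulVec, dotProduct_add]
  map_smul' c A := by simp [Matrix.smul_mulVec, dotProduct_smul, smul_eq_mul]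

lemma UMqf_apply (w : EuclideanSpace ℝ (Fin d)) (M : Matrix (Fin d) (Fin d) ℝ) :
    UMqf w M = w ⬝ᵥ (M *ᵥ w) := rfl

lemma UMqf_fm (w x : EuclideanSpace ℝ (Fin d)) : UMqf w (UMfm x) = (w ⬝ᵥ x) ^ 2 := by
  simp only [UMqf_apply, UMfm, dotProduct, Matrix.mulVec, Matrix.vecMulVec_apply, sq]
  rw [Finset.sum_mul_sum]
  rw [Finset.sum_congr rfl fun i _ => Finset.mul_sum (Finset.univ) _ (w i)]
  exact Finset.sum_congr rfl fun i _ => Finset.sum_congr rfl fun j _ => by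
    simp [dotProduct]; ring

lemma UMinner_eq_dot (w x : EuclideanSpace ℝ (Fin d)) : ⟪w, x⟫_ℝ = w ⬝ᵥ x := by
  rw [PiLp.inner_apply]
  simp [RCLike.inner_apply, dotProduct, mul_comm]

/-- set of symmetric positive semidefinite matrices -/
def UMS (d : ℕ) : Set (Matrix (Fin d) (Fin d) ℝ) :=
  {M | M.IsHermitian ∧ ∀ v : Fin d → ℝ, 0 ≤ v ⬝ᵥ (M *ᵥ v)}

lemma UMS_convex : Convex ℝ (UMS d) := by
  intro M hM N hN a b ha hb hab
  refine ⟨?_, fun v => ?_⟩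
  · unfold Matrix.IsHermitian
    rw [Matrix.conjTranspose_add, Matrix.conjTranspose_smul, Matrix.conjTranspose_smul,
      hM.1, hN.1, star_trivial, star_trivial]
  · rw [Matrix.add_mulVec, dotProduct_add, Matrix.smul_mulVec,
      Matrix.smul_mulVec, dotProduct_smul, dotProduct_smul,
      smul_eq_mul, smul_eq_mul]
    exact add_nonneg (mul_nonneg ha (hM.2 v)) (mul_nonneg hb (hN.2 v))

lemma UMfm_mem_S (x : EuclideanSpace ℝ (Fin d)) : UMfm x ∈ UMS d := by
  refine ⟨?_, fun v => ?_⟩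
  · unfold Matrix.IsHermitian
    ext i j
    simp [UMfm, Matrix.conjTranspose_apply, Matrix.vecMulVec_apply, mul_comm]
  · have h : (WithLp.toLp 2 v : EuclideanSpace ℝ (Fin d)) ⬝ᵥ (UMfm x *ᵥ v)
        = ((WithLp.toLp 2 v : EuclideanSpace ℝ (Fin d)) ⬝ᵥ x) ^ 2 := UMqf_fm (WithLp.toLp 2 v) x
    rw [show v ⬝ᵥ (UMfm x *ᵥ v) = ((WithLp.toLp 2 v : EuclideanSpace ℝ (Fin d)) ⬝ᵥ (UMfm x *ᵥ v)) from rfl, h]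
    positivity

lemma UMdot_self_pos {v : Fin d → ℝ} (hv : v ≠ 0) : 0 < v ⬝ᵥ v := by
  obtain ⟨i, hi⟩ := Function.ne_iff.mp hv
  have h : (0:ℝ) < v i * v i := mul_self_pos.mpr hi
  calc (0:ℝ) < v i * v i := h
    _ ≤ ∑ j, v j * v j := Finset.single_le_sum (fun j _ => mul_self_nonneg (v j)) (Finset.mem_univ i)
    _ = v ⬝ᵥ v := rfl

lemma UMB_posdef {M : Matrix (Fin d) (Fin d) ℝ}
    (hM : M.IsHermitian) (hpsd : ∀ v : Fin d → ℝ, 0 ≤ v ⬝ᵥ (M *ᵥ v)) {ε : ℝ} (hε : 0 < ε) :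
    (M + ε • (1 : Matrix (Fin d) (Fin d) ℝ)).PosDef := by
  apply Matrix.PosDef.of_dotProduct_mulVec_pos
  · unfold Matrix.IsHermitian
    rw [Matrix.conjTranspose_add, Matrix.conjTranspose_smul, Matrix.conjTranspose_one, hM,
      star_trivial]
  · intro v hv
    rw [star_trivial, Matrix.add_mulVec, dotProduct_add, Matrix.smul_mulVec,
      Matrix.one_mulVec, dotProduct_smul, smul_eq_mul]
    exact add_pos_of_nonneg_of_pos (hpsd v) (mul_pos hε (UMdot_self_pos hv))

lemma UMquad {a b c : ℝ} (h : ∀ t : ℝ, 0 ≤ a - 2 * t * c + t ^ 2 * b) : c ^ 2 ≤ a * b := by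
  have h' : ∀ t : ℝ, 0 ≤ b * (t * t) + (-(2 * c)) * t + a := by
    intro t; nlinarith [h t]
  have hd := discrim_le_zero h'
  unfold discrim at hd
  nlinarith [hd]

/-- Cauchy–Schwarz for a positive definite symmetric matrix. -/
lemma UMcs {B : Matrix (Fin d) (Fin d) ℝ} (hB : B.PosDef) (w x : Fin d → ℝ) :
    (w ⬝ᵥ x) ^ 2 ≤ (w ⬝ᵥ (B *ᵥ w)) * (x ⬝ᵥ (B⁻¹ *ᵥ x)) := by
  have hBt : Bᵀ = B := by
    have h := hB.isHermitian
    unfold Matrix.IsHermitian at h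
    ext i j
    conv_lhs => rw [← h]
    simp [Matrix.conjTranspose_apply]
  have hunit : IsUnit B.det := hB.det_pos.ne'.isUnit
  have hBu : B *ᵥ (B⁻¹ *ᵥ x) = x := by
    rw [Matrix.mulVec_mulVec, Matrix.mul_nonsing_inv _ hunit, Matrix.one_mulVec]
  have hpsd : ∀ v : Fin d → ℝ, 0 ≤ v ⬝ᵥ (B *ᵥ v) := by
    intro v
    have h := hB.posSemidef.dotProduct_mulVec_nonneg v
    rwa [star_trivial] at h
  set u := B⁻¹ *ᵥ x with hu
  apply UMquad
  intro t
  have h := hpsd (w - t • u)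
  have hexp : (w - t • u) ⬝ᵥ (B *ᵥ (w - t • u))
      = (w ⬝ᵥ (B *ᵥ w)) - 2 * t * (w ⬝ᵥ x) + t ^ 2 * (x ⬝ᵥ (B⁻¹ *ᵥ x)) := by
    rw [Matrix.mulVec_sub, Matrix.mulVec_smul, hBu, sub_dotProduct,
      dotProduct_sub, dotProduct_sub, smul_dotProduct,
      dotProduct_smul, dotProduct_smul, smul_dotProduct]
    have h1 : u ⬝ᵥ (B *ᵥ w) = w ⬝ᵥ x := by
      rw [Matrix.dotProduct_mulVec u B w, ← Matrix.mulVec_transpose, hBt, hBu,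
        dotProduct_comm]
    have h2 : u ⬝ᵥ x = x ⬝ᵥ (B⁻¹ *ᵥ x) := dotProduct_comm u x
    rw [h1, h2]
    simp only [smul_eq_mul]
    ring
  rw [hexp] at h
  exact h

lemma UMtrace_fm (B : Matrix (Fin d) (Fin d) ℝ) (x : Fin d → ℝ) :
    (B * Matrix.vecMulVec x x).trace = x ⬝ᵥ (B *ᵥ x) := by
  simp only [Matrix.trace, Matrix.diag, Matrix.mul_apply, Matrix.vecMulVec_apply,
    dotProduct, Matrix.mulVec, Finset.mul_sum]
  exact Finset.sum_congr rfl fun i _ => Finset.sum_congr rfl fun j _ => by ring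

lemma UMtrace_nonneg {B : Matrix (Fin d) (Fin d) ℝ} (hB : B.PosDef) : 0 ≤ B.trace := by
  have hdiag : ∀ i, 0 ≤ B i i := by
    intro i
    have hne : (Pi.single i (1:ℝ) : Fin d → ℝ) ≠ 0 := by
      intro h
      have h' := congrFun h i
      simp at h'
    have h := hB.dotProduct_mulVec_pos hne
    rw [star_trivial, single_dotProduct, Matrix.mulVec_single] at h
    simpa using h.le
  exact Finset.sum_nonneg fun i _ => hdiag i

lemma UMfirst_order {K : Set (Matrix (Fin d) (Fin d) ℝ)} (hKconv : Convex ℝ K)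
    {M : Matrix (Fin d) (Fin d) ℝ} (hM : M ∈ K) {ε : ℝ} (hε : 0 < ε)
    (hB : (M + ε • (1 : Matrix (Fin d) (Fin d) ℝ)).PosDef)
    (hopt : ∀ A ∈ K, (A + ε • (1 : Matrix (Fin d) (Fin d) ℝ)).det
        ≤ (M + ε • (1 : Matrix (Fin d) (Fin d) ℝ)).det)
    {A : Matrix (Fin d) (Fin d) ℝ} (hA : A ∈ K) :
    ((M + ε • (1 : Matrix (Fin d) (Fin d) ℝ))⁻¹ * A).trace ≤ d := by
  set B := M + ε • (1 : Matrix (Fin d) (Fin d) ℝ) with hBdef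
  have hunit : IsUnit B.det := hB.det_pos.ne'.isUnit
  set C := B⁻¹ * (A - M) with hCdef
  set E := (1 + (X : ℝ[X]) • C.map Polynomial.C).det.divX.divX with hEdef
  have hseg : ∀ θ : ℝ, (B + θ • (A - M)).det
      = B.det * (1 + C.trace * θ + (E.eval θ) * θ ^ 2) := by
    intro θ
    have h1 : B + θ • (A - M) = B * (1 + θ • C) := by
      rw [mul_add, mul_one, mul_smul_comm, hCdef, ← mul_assoc,
        Matrix.mul_nonsing_inv _ hunit, one_mul]
    rw [h1, Matrix.det_mul, Matrix.det_one_add_smul]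
  have htrC : C.trace ≤ 0 := by
    have hbound : ∀ θ ∈ Set.Ioc (0:ℝ) 1, C.trace ≤ -(E.eval θ * θ) := by
      intro θ hθ
      have hmem : (1 - θ) • M + θ • A ∈ K :=
        hKconv hM hA (by linarith [hθ.2]) hθ.1.le (by ring)
      have heq : ((1 - θ) • M + θ • A) + ε • (1 : Matrix (Fin d) (Fin d) ℝ)
          = B + θ • (A - M) := by
        rw [hBdef]; module
      have h2 := hopt _ hmem
      rw [heq, hseg θ] at h2
      have h3 : 1 + C.trace * θ + E.eval θ * θ ^ 2 ≤ 1 := by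
        nth_rewrite 2 [← mul_one B.det] at h2
        linarith [(mul_le_mul_iff_right₀ hB.det_pos).mp h2]
      have h4 : (C.trace + E.eval θ * θ) * θ ≤ 0 * θ := by nlinarith [hθ.1]
      have h5 := le_of_mul_le_mul_right h4 hθ.1
      linarith
    have htend : Tendsto (fun θ : ℝ => -(E.eval θ * θ)) (nhdsWithin 0 (Set.Ioi 0))
        (nhds 0) := by
      have hc : Continuous (fun θ : ℝ => -(E.eval θ * θ)) :=
        (E.continuous.mul continuous_id).neg
      have h0 := (hc.tendsto 0).mono_left
        (nhdsWithin_le_nhds (s := Set.Ioi (0:ℝ)))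
      simpa using h0
    refine ge_of_tendsto htend ?_
    filter_upwards [Ioc_mem_nhdsGT_of_mem (Set.mem_Ico.mpr ⟨le_refl (0:ℝ), zero_lt_one⟩)]
      with θ hθ
    exact hbound θ hθ
  have hCsplit : C.trace = (B⁻¹ * A).trace - (B⁻¹ * M).trace := by
    rw [hCdef, mul_sub, Matrix.trace_sub]
  have hBM : (B⁻¹ * M).trace = (d : ℝ) - ε * B⁻¹.trace := by
    have hM' : M = B - ε • (1 : Matrix (Fin d) (Fin d) ℝ) := by rw [hBdef]; module
    rw [hM', mul_sub, Matrix.nonsing_inv_mul _ hunit, mul_smul_comm, mul_one,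
      Matrix.trace_sub, Matrix.trace_one, Matrix.trace_smul]
    simp
  have hinv : 0 ≤ B⁻¹.trace := UMtrace_nonneg hB.inv
  have h6 : (B⁻¹ * A).trace ≤ (B⁻¹ * M).trace := by linarith [htrC, hCsplit.symm.le]
  rw [hBM] at h6
  nlinarith [hε]

lemma UMfm_continuous : Continuous (UMfm (d := d)) := by
  refine continuous_matrix fun i j => ?_
  exact ((EuclideanSpace.proj i).continuous).mul ((EuclideanSpace.proj j).continuous)

lemma UMisCompact_hull {Φ : Set (EuclideanSpace ℝ (Fin d))} (hne : Φ.Nonempty)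
    (hΦ : IsCompact Φ) : IsCompact (convexHull ℝ (UMfm '' Φ)) := by
  classical
  set N := d * d + 1 with hN
  set g : (Fin N → ℝ) × (Fin N → EuclideanSpace ℝ (Fin d)) → Matrix (Fin d) (Fin d) ℝ :=
    fun p => ∑ i, p.1 i • UMfm (p.2 i) with hg
  have hgc : Continuous g := by
    refine continuous_finset_sum _ fun i _ => ?_
    exact ((continuous_apply i).comp continuous_fst).smul
      (UMfm_continuous.comp ((continuous_apply i).comp continuous_snd))
  set C : Set ((Fin N → ℝ) × (Fin N → EuclideanSpace ℝ (Fin d))) :=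
    (stdSimplex ℝ (Fin N)) ×ˢ (Set.univ.pi fun _ : Fin N => Φ) with hC
  have hCc : IsCompact C := (isCompact_stdSimplex ℝ _).prod (isCompact_univ_pi fun _ => hΦ)
  have himg : convexHull ℝ (UMfm '' Φ) = g '' C := by
    apply Set.Subset.antisymm
    · intro x hx
      obtain ⟨ι, hft, z, w, hrange, hai, hpos, hsum, heq⟩ :=
        eq_pos_convex_span_of_mem_convexHull hx
      letI := hft
      rcases isEmpty_or_nonempty ι with hempty | hnonempty
      · simp at hsum
      obtain ⟨n, hn⟩ : ∃ n, Fintype.card ι = n + 1 :=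
        ⟨Fintype.card ι - 1, (Nat.succ_pred_eq_of_pos Fintype.card_pos).symm⟩
      have hfin : Module.finrank ℝ
          ↥(vectorSpan ℝ (Set.range z)) ≤ d * d := by
        have h1 := Submodule.finrank_le (vectorSpan ℝ (Set.range z))
        have h2 : Module.finrank ℝ (Matrix (Fin d) (Fin d) ℝ) = d * d := by
          rw [Module.finrank_matrix]
          simp
        omega
      have hcard : Fintype.card ι ≤ N := by
        rw [hn]
        have := hai.finrank_vectorSpan hn
        omega
      obtain ⟨e⟩ : Nonempty (ι ↪ Fin N) := by
        rw [Function.Embedding.nonempty_iff_card_le]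
        simpa using hcard
      have hz' : ∀ i, ∃ y, y ∈ Φ ∧ UMfm y = z i := fun i => hrange (Set.mem_range_self i)
      choose ζ hζΦ hζeq using hz'
      set t : Fin N → ℝ := fun j => if h : ∃ i, e i = j then w h.choose else 0 with ht
      set zz : Fin N → EuclideanSpace ℝ (Fin d) :=
        fun j => if h : ∃ i, e i = j then ζ h.choose else hne.some with hzz
      have hte : ∀ i, t (e i) = w i := by
        intro i
        have hex : ∃ i', e i' = e i := ⟨i, rfl⟩
        have hch : hex.choose = i := e.injective hex.choose_spec
        show (if h : ∃ i', e i' = e i then w h.choose else 0) = w i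
        rw [dif_pos hex, hch]
      have hzze : ∀ i, zz (e i) = ζ i := by
        intro i
        have hex : ∃ i', e i' = e i := ⟨i, rfl⟩
        have hch : hex.choose = i := e.injective hex.choose_spec
        show (if h : ∃ i', e i' = e i then ζ h.choose else hne.some) = ζ i
        rw [dif_pos hex, hch]
      have ht0 : ∀ j, j ∉ Finset.univ.image e → t j = 0 := by
        intro j hj
        show (if h : ∃ i, e i = j then w h.choose else 0) = 0
        rw [dif_neg]
        intro ⟨i, hi⟩
        exact hj (Finset.mem_image.mpr ⟨i, Finset.mem_univ i, hi⟩)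
      have htnn : ∀ j, 0 ≤ t j := by
        intro j
        show 0 ≤ if h : ∃ i, e i = j then w h.choose else 0
        split
        · exact (hpos _).le
        · exact le_refl 0
      have hzzΦ : ∀ j, zz j ∈ Φ := by
        intro j
        show (if h : ∃ i, e i = j then ζ h.choose else hne.some) ∈ Φ
        split
        · exact hζΦ _
        · exact hne.some_mem
      have hinj : ∀ x ∈ Finset.univ, ∀ y ∈ Finset.univ, e x = e y → x = y :=
        fun x _ y _ h => e.injective h
      have hsum_t : ∑ j, t j = 1 := by
        rw [← Finset.sum_subset (Finset.subset_univ (Finset.univ.image e))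
          (fun j _ hj => ht0 j hj), Finset.sum_image hinj]
        simpa [hte] using hsum
      refine ⟨(t, zz), ⟨⟨htnn, hsum_t⟩, fun i _ => hzzΦ i⟩, ?_⟩
      show ∑ j, t j • UMfm (zz j) = x
      rw [← Finset.sum_subset (Finset.subset_univ (Finset.univ.image e))
        (fun j _ hj => by rw [ht0 j hj, zero_smul]), Finset.sum_image hinj]
      rw [← heq]
      exact Finset.sum_congr rfl fun i _ => by rw [hte, hzze, hζeq]
    · rintro _ ⟨⟨t, zz⟩, ⟨⟨htn, hts⟩, hzz⟩, rfl⟩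
      exact Convex.sum_mem (convex_convexHull ℝ _) (fun i _ => htn i) hts
        (fun i _ => subset_convexHull ℝ _ ⟨zz i, hzz i (Set.mem_univ i), rfl⟩)
  rw [himg]
  exact hCc.image hgc

/-- submodule of symmetric matrices -/
def UMsym (d : ℕ) : Submodule ℝ (Matrix (Fin d) (Fin d) ℝ) where
  carrier := {A | Aᵀ = A}
  add_mem' := by
    intro a b ha hb
    simp only [Set.mem_setOf_eq] at *
    rw [Matrix.transpose_add, ha, hb]
  zero_mem' := Matrix.transpose_zero
  smul_mem' := by
    intro c a ha
    simp only [Set.mem_setOf_eq] at *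
    rw [Matrix.transpose_smul, ha]

lemma UMsym_ne_top (hd2 : 2 ≤ d) : UMsym d ≠ ⊤ := by
  intro h
  set i0 : Fin d := ⟨0, by omega⟩ with hi0
  set i1 : Fin d := ⟨1, by omega⟩ with hi1
  have hne : i1 ≠ i0 := by
    simp [hi0, hi1, Fin.ext_iff]
  have hmem : Matrix.single i0 i1 (1:ℝ) ∈ UMsym d := by
    rw [h]; trivial
  have heq : (Matrix.single i0 i1 (1:ℝ))ᵀ = Matrix.single i0 i1 (1:ℝ) := hmem
  have h1 := congrFun (congrFun heq i0) i1
  rw [Matrix.transpose_apply] at h1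
  simp [Matrix.single, hne] at h1

/-- the key pointwise bound, for `d ≥ 2` -/
theorem UMpointwise (hd2 : 2 ≤ d) (Φ : Set (EuclideanSpace ℝ (Fin d))) (hne : Φ.Nonempty)
    (hΦ : IsCompact Φ) :
    ∃ (T : Finset (EuclideanSpace ℝ (Fin d))) (p : EuclideanSpace ℝ (Fin d) → ℝ),
      T.card ≤ d ^ 2 ∧ ↑T ⊆ Φ ∧ (∀ x, 0 ≤ p x) ∧ (∑ x ∈ T, p x = 1) ∧
      ∀ (w : EuclideanSpace ℝ (Fin d)), ∀ x ∈ Φ,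
        (w ⬝ᵥ x) ^ 2 ≤ (d : ℝ) * ∑ y ∈ T, p y * (w ⬝ᵥ y) ^ 2 := by
  classical
  set K := convexHull ℝ (UMfm '' Φ) with hKdef
  have hK : IsCompact K := UMisCompact_hull hne hΦ
  have hKconv : Convex ℝ K := convex_convexHull ℝ _
  have hKne : K.Nonempty := ⟨UMfm hne.some, subset_convexHull ℝ _ ⟨_, hne.some_mem, rfl⟩⟩
  have hKS : ∀ {M}, M ∈ K → M ∈ UMS d := fun {M} h =>
    convexHull_min (by rintro _ ⟨x, hx, rfl⟩; exact UMfm_mem_S x) UMS_convex h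
  have hεpos : ∀ n : ℕ, (0:ℝ) < ((n:ℝ)+1)⁻¹ := fun n => by positivity
  have hmax : ∀ n : ℕ, ∃ M ∈ K, ∀ A ∈ K,
      (A + ((n:ℝ)+1)⁻¹ • (1 : Matrix (Fin d) (Fin d) ℝ)).det
        ≤ (M + ((n:ℝ)+1)⁻¹ • (1 : Matrix (Fin d) (Fin d) ℝ)).det := by
    intro n
    obtain ⟨M, hMK, hMmax⟩ := hK.exists_isMaxOn hKne
      ((Continuous.matrix_det (continuous_id.add continuous_const)).continuousOn)
    exact ⟨M, hMK, fun A hA => (isMaxOn_iff.mp hMmax) A hA⟩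
  choose Ms hMsK hMsmax using hmax
  have key : ∀ n : ℕ, ∀ w : EuclideanSpace ℝ (Fin d), ∀ x ∈ Φ,
      (w ⬝ᵥ x) ^ 2 ≤ (d:ℝ) * (UMqf w (Ms n) + ((n:ℝ)+1)⁻¹ * (w ⬝ᵥ w)) := by
    intro n w x hx
    set ε := ((n:ℝ)+1)⁻¹ with hε
    have hS := hKS (hMsK n)
    have hB : (Ms n + ε • (1 : Matrix (Fin d) (Fin d) ℝ)).PosDef :=
      UMB_posdef hS.1 hS.2 (hεpos n)
    have hfmK : UMfm x ∈ K := subset_convexHull ℝ _ ⟨x, hx, rfl⟩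
    have htr := UMfirst_order hKconv (hMsK n) (hεpos n) hB (hMsmax n) hfmK
    have htr2 : (x : Fin d → ℝ) ⬝ᵥ ((Ms n + ε • (1 : Matrix (Fin d) (Fin d) ℝ))⁻¹ *ᵥ x)
        ≤ (d:ℝ) := by
      rw [← UMtrace_fm]
      exact htr
    have hcs := UMcs hB w x
    have ha : 0 ≤ (w : Fin d → ℝ) ⬝ᵥ ((Ms n + ε • (1 : Matrix (Fin d) (Fin d) ℝ)) *ᵥ w) := by
      have h := hB.posSemidef.dotProduct_mulVec_nonneg w
      rwa [star_trivial] at h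
    have haval : (w : Fin d → ℝ) ⬝ᵥ ((Ms n + ε • (1 : Matrix (Fin d) (Fin d) ℝ)) *ᵥ w)
        = UMqf w (Ms n) + ε * (w ⬝ᵥ w) := by
      rw [Matrix.add_mulVec, dotProduct_add, Matrix.smul_mulVec,
        Matrix.one_mulVec, dotProduct_smul, smul_eq_mul, UMqf_apply]
    rw [← haval]
    nlinarith [hcs, htr2, ha]
  haveI : FirstCountableTopology (Matrix (Fin d) (Fin d) ℝ) :=
    inferInstanceAs (FirstCountableTopology (Fin d → Fin d → ℝ))
  obtain ⟨Minf, hMinfK, φm, hφmono, htend⟩ := hK.tendsto_subseq hMsK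
  have hεlim : Tendsto (fun k : ℕ => ((φm k : ℝ)+1)⁻¹) atTop (nhds 0) := by
    apply squeeze_zero (fun k => (hεpos _).le)
      (g := fun k : ℕ => ((k:ℝ)+1)⁻¹)
    · intro k
      apply inv_anti₀ (by positivity)
      have : (k:ℝ) ≤ (φm k : ℝ) := by exact_mod_cast hφmono.le_apply
      linarith
    · have h := tendsto_one_div_add_atTop_nhds_zero_nat (𝕜 := ℝ)
      simpa [one_div] using h
  have hlim : ∀ w : EuclideanSpace ℝ (Fin d), ∀ x ∈ Φ,
      (w ⬝ᵥ x) ^ 2 ≤ (d:ℝ) * UMqf w Minf := by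
    intro w x hx
    have hqcont : Continuous (UMqf w) := (UMqf w).continuous_of_finiteDimensional
    have h1 : Tendsto (fun k => (d:ℝ) * (UMqf w (Ms (φm k)) + ((φm k:ℝ)+1)⁻¹ * (w ⬝ᵥ w)))
        atTop (nhds ((d:ℝ) * (UMqf w Minf + 0 * (w ⬝ᵥ w)))) :=
      (((hqcont.tendsto Minf).comp htend).add (hεlim.mul_const _)).const_mul _
    rw [zero_mul, add_zero] at h1
    exact ge_of_tendsto h1 (Eventually.of_forall fun k => key (φm k) w x hx)
  obtain ⟨ι, hft, z, wt, hrange, hai, hpos, hsum1, hrep⟩ :=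
    eq_pos_convex_span_of_mem_convexHull hMinfK
  letI := hft
  rcases isEmpty_or_nonempty ι with hempty | hnonempty
  · simp at hsum1
  obtain ⟨n, hn⟩ : ∃ n, Fintype.card ι = n + 1 :=
    ⟨Fintype.card ι - 1, (Nat.succ_pred_eq_of_pos Fintype.card_pos).symm⟩
  have hsymz : ∀ i, (z i)ᵀ = z i := by
    intro i
    obtain ⟨x, _, hfx⟩ := hrange (Set.mem_range_self i)
    rw [← hfx]
    ext a b
    simp [UMfm, Matrix.transpose_apply, Matrix.vecMulVec_apply, mul_comm]
  have hvs : vectorSpan ℝ (Set.range z) ≤ UMsym d := by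
    rw [vectorSpan_def, Submodule.span_le]
    rintro v hv
    rw [Set.mem_vsub] at hv
    obtain ⟨a, ha, b, hb, rfl⟩ := hv
    obtain ⟨i, rfl⟩ := ha
    obtain ⟨j, rfl⟩ := hb
    show (z i - z j)ᵀ = z i - z j
    rw [Matrix.transpose_sub, hsymz i, hsymz j]
  have hcard : Fintype.card ι ≤ d ^ 2 := by
    have h1 := hai.finrank_vectorSpan hn
    have h2 : Module.finrank ℝ ↥(vectorSpan ℝ (Set.range z))
        ≤ Module.finrank ℝ ↥(UMsym d) := Submodule.finrank_mono hvs
    have h3 : Module.finrank ℝ ↥(UMsym d) < Module.finrank ℝ (Matrix (Fin d) (Fin d) ℝ) :=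
      Submodule.finrank_lt (UMsym_ne_top hd2)
    have h4 : Module.finrank ℝ (Matrix (Fin d) (Fin d) ℝ) = d * d := by
      rw [Module.finrank_matrix]; simp
    rw [pow_two]
    omega
  choose ζ hζΦ hζeq using fun i => hrange (Set.mem_range_self i)
  have hζinj : Function.Injective ζ := fun i j h =>
    hai.injective (by rw [← hζeq i, ← hζeq j, h])
  refine ⟨Finset.univ.image ζ, fun x => ∑ i ∈ Finset.univ.filter (fun i => ζ i = x), wt i,
    ?_, ?_, ?_, ?_, ?_⟩
  · rw [Finset.card_image_of_injective _ hζinj, Finset.card_univ]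
    exact hcard
  · intro x hx
    obtain ⟨i, _, rfl⟩ := Finset.mem_image.mp hx
    exact hζΦ i
  · intro x
    exact Finset.sum_nonneg fun i _ => (hpos i).le
  · rw [Finset.sum_fiberwise_of_maps_to (fun i _ => Finset.mem_image_of_mem ζ (Finset.mem_univ i)) wt]
    exact hsum1
  · intro w x hx
    have h0 := hlim w x hx
    have hQ : UMqf w Minf = ∑ i, wt i * (w ⬝ᵥ ζ i) ^ 2 := by
      rw [← hrep, map_sum]
      exact Finset.sum_congr rfl fun i _ => by
        rw [_root_.map_smul, smul_eq_mul, ← hζeq i, UMqf_fm]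
    have hsumT : ∑ y ∈ Finset.univ.image ζ,
        (∑ i ∈ Finset.univ.filter (fun i => ζ i = y), wt i) * (w ⬝ᵥ y) ^ 2
        = ∑ i, wt i * (w ⬝ᵥ ζ i) ^ 2 := by
      rw [← Finset.sum_fiberwise_of_maps_to
        (fun i _ => Finset.mem_image_of_mem ζ (Finset.mem_univ i))
        (fun i => wt i * (w ⬝ᵥ ζ i) ^ 2)]
      refine Finset.sum_congr rfl fun y _ => ?_
      rw [Finset.sum_mul]
      refine Finset.sum_congr rfl fun i hi => ?_
      rw [(Finset.mem_filter.mp hi).2]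
    rw [hsumT, ← hQ]
    exact h0

end UMCNaux

/-- **A universal measure achieving relative condition number at most `d`.**
For a nonempty compact set `Φ ⊂ ℝ^d` of feature vectors, there is a probability
measure `ν` supported on at most `d²` points of `Φ` (given by the finite support `T`
and weights `p`) such that for every probability measure `μ` supported on `Φ` and
every `w ∈ ℝ^d`, `wᵀ Σ_μ w ≤ d · wᵀ Σ_ν w`, where `Σ_υ = E_{φ∼υ}[φ φᵀ]`, i.e.
`wᵀ Σ_υ w = E_{φ∼υ}[⟪w, φ⟫²]`. -/
theorem universal_measure_condition_number (d : ℕ) (hd : 0 < d)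
    (Φ : Set (EuclideanSpace ℝ (Fin d))) (hne : Φ.Nonempty) (hΦ : IsCompact Φ) :
    ∃ (T : Finset (EuclideanSpace ℝ (Fin d))) (p : EuclideanSpace ℝ (Fin d) → ℝ),
      T.card ≤ d ^ 2 ∧ ↑T ⊆ Φ ∧ (∀ x, 0 ≤ p x) ∧ (∑ x ∈ T, p x = 1) ∧
      ∀ μ : Measure (EuclideanSpace ℝ (Fin d)), IsProbabilityMeasure μ → μ Φᶜ = 0 →
        ∀ w : EuclideanSpace ℝ (Fin d),
          ∫ x, ⟪w, x⟫_ℝ ^ 2 ∂μ ≤ (d : ℝ) * ∑ x ∈ T, p x * ⟪w, x⟫_ℝ ^ 2 := by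
  classical
  have main : ∃ (T : Finset (EuclideanSpace ℝ (Fin d))) (p : EuclideanSpace ℝ (Fin d) → ℝ),
      T.card ≤ d ^ 2 ∧ ↑T ⊆ Φ ∧ (∀ x, 0 ≤ p x) ∧ (∑ x ∈ T, p x = 1) ∧
      ∀ (w : EuclideanSpace ℝ (Fin d)), ∀ x ∈ Φ,
        ⟪w, x⟫_ℝ ^ 2 ≤ (d : ℝ) * ∑ y ∈ T, p y * ⟪w, y⟫_ℝ ^ 2 := by
    rcases lt_or_ge d 2 with h1 | h2
    · obtain rfl : d = 1 := by omega
      have hcont : Continuous (fun x : EuclideanSpace ℝ (Fin 1) => x 0 * x 0) :=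
        ((EuclideanSpace.proj (0 : Fin 1)).continuous).mul
          ((EuclideanSpace.proj (0 : Fin 1)).continuous)
      obtain ⟨x₀, hx₀Φ, hmax⟩ := hΦ.exists_isMaxOn hne hcont.continuousOn
      refine ⟨{x₀}, fun _ => 1, by simp, by simp [Set.singleton_subset_iff, hx₀Φ],
        fun _ => zero_le_one, by simp, ?_⟩
      intro w x hx
      have hm := (isMaxOn_iff.mp hmax) x hx
      have hiw : ∀ y : EuclideanSpace ℝ (Fin 1), ⟪w, y⟫_ℝ = w 0 * y 0 := by
        intro y
        rw [PiLp.inner_apply]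
        simp [RCLike.inner_apply, mul_comm]
      rw [Finset.sum_singleton, hiw x, hiw x₀]
      push_cast
      nlinarith [hm, sq_nonneg (w 0)]
    · obtain ⟨T, p, hc1, hc2, hc3, hc4, hc5⟩ := UMpointwise h2 Φ hne hΦ
      refine ⟨T, p, hc1, hc2, hc3, hc4, ?_⟩
      intro w x hx
      simp only [UMinner_eq_dot]
      exact hc5 w x hx
  obtain ⟨T, p, hcard, hsub, hp0, hp1, hpt⟩ := main
  refine ⟨T, p, hcard, hsub, hp0, hp1, ?_⟩
  intro μ hμ hμΦ w
  haveI := hμ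
  set Cb := (d:ℝ) * ∑ x ∈ T, p x * ⟪w, x⟫_ℝ ^ 2 with hCb
  have hCb0 : 0 ≤ Cb :=
    mul_nonneg (Nat.cast_nonneg d)
      (Finset.sum_nonneg fun y _ => mul_nonneg (hp0 y) (sq_nonneg _))
  by_cases hInt : Integrable (fun x => ⟪w, x⟫_ℝ ^ 2) μ
  · have hsubset : {x : EuclideanSpace ℝ (Fin d) | ¬ ⟪w, x⟫_ℝ ^ 2 ≤ Cb} ⊆ Φᶜ :=
      fun x hx hxΦ => hx (hpt w x hxΦ)
    have hae : ∀ᵐ x ∂μ, ⟪w, x⟫_ℝ ^ 2 ≤ Cb := by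
      rw [ae_iff]
      exact measure_mono_null hsubset hμΦ
    calc ∫ x, ⟪w, x⟫_ℝ ^ 2 ∂μ ≤ ∫ _, Cb ∂μ := integral_mono_ae hInt (integrable_const _) hae
      _ = Cb := by simp [integral_const, measure_univ]
  · rw [integral_undef hInt]
    exact hCb0
end

section
/- (Smoothness of linear functionals of the softmax) Fix a finite set A and c ∈ ℝ^A, and define F : ℝ^A → ℝ by F(θ) = Σ_{a∈A} σ(θ)_a c_a, where σ(θ)_a = exp(θ_a)/Σ_{a′} exp(θ_{a′}) is the softmax. Then F has 5‖c‖_∞-Lipschitz gradient: ‖∇F(θ) − ∇F(θ′)‖₂ ≤ 5‖c‖_∞ ‖θ − θ′‖₂ for all θ, θ′ ∈ ℝ^A. Equivalently, the Hessian satisfies ‖∇²F(θ)‖₂ ≤ 5‖c‖_∞ for all θ, where ∇²F(θ) = diag(σ(θ)⊙c) − σ(θ)(σ(θ)⊙c)ᵀ − (σ(θ)·c)(diag(σ(θ)) − σ(θ)σ(θ)ᵀ) − (σ(θ)⊙c − (σ(θ)·c)σ(θ))σ(θ)ᵀ. -/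
open scoped BigOperators RealInnerProductSpace

section SoftmaxSmoothAux

variable {A : Type} [Fintype A]

noncomputable def Zf (θ : EuclideanSpace ℝ A) : ℝ := ∑ a, Real.exp (θ a)
noncomputable def Sf (c : A → ℝ) (θ : EuclideanSpace ℝ A) : ℝ := ∑ a, Real.exp (θ a) * c a
noncomputable def sm (θ : EuclideanSpace ℝ A) : EuclideanSpace ℝ A :=
  WithLp.toLp 2 fun a => Real.exp (θ a) * (Zf θ)⁻¹
noncomputable def mf (c : A → ℝ) (θ : EuclideanSpace ℝ A) : ℝ := ∑ a, sm θ a * c a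
noncomputable def Gf (c : A → ℝ) (θ : EuclideanSpace ℝ A) : EuclideanSpace ℝ A :=
  WithLp.toLp 2 fun a => sm θ a * (c a - mf c θ)

variable [Nonempty A]

lemma Zf_pos (θ : EuclideanSpace ℝ A) : 0 < Zf θ :=
  Finset.sum_pos (fun a _ => Real.exp_pos _) Finset.univ_nonempty

lemma sm_nonneg (θ : EuclideanSpace ℝ A) (a : A) : 0 ≤ sm θ a :=
  mul_nonneg (Real.exp_pos _).le (inv_nonneg.2 (Zf_pos θ).le)

lemma sm_sum (θ : EuclideanSpace ℝ A) : ∑ a, sm θ a = 1 := by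
  simp only [sm, PiLp.toLp_apply]
  rw [← Finset.sum_mul]
  exact mul_inv_cancel₀ (Zf_pos θ).ne'

lemma sm_le_one (θ : EuclideanSpace ℝ A) (a : A) : sm θ a ≤ 1 := by
  rw [← sm_sum θ]
  exact Finset.single_le_sum (fun b _ => sm_nonneg θ b) (Finset.mem_univ a)

lemma euclid_norm_le {x : EuclideanSpace ℝ A} {r : ℝ} (hr : 0 ≤ r)
    (h : ∑ a, (x a)^2 ≤ r^2) : ‖x‖ ≤ r := by
  rw [EuclideanSpace.norm_eq]
  simp only [Real.norm_eq_abs, sq_abs]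
  calc Real.sqrt (∑ a, (x a)^2) ≤ Real.sqrt (r^2) := Real.sqrt_le_sqrt h
  _ = r := Real.sqrt_sq hr

lemma euclid_norm_sq (x : EuclideanSpace ℝ A) : ‖x‖^2 = ∑ a, (x a)^2 := by
  rw [EuclideanSpace.norm_eq, Real.sq_sqrt (by positivity)]
  simp [sq_abs]

lemma norm_sm_le_one (θ : EuclideanSpace ℝ A) : ‖sm θ‖ ≤ 1 := by
  refine euclid_norm_le zero_le_one ?_
  rw [one_pow, ← sm_sum θ]
  refine Finset.sum_le_sum fun a _ => ?_
  have h1 := sm_le_one θ a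
  have h0 := sm_nonneg θ a
  nlinarith

noncomputable def ZD (θ : EuclideanSpace ℝ A) : EuclideanSpace ℝ A →L[ℝ] ℝ :=
  ∑ a, Real.exp (θ a) • (EuclideanSpace.proj a)

lemma hasFDerivAt_Zf (θ : EuclideanSpace ℝ A) : HasFDerivAt Zf (ZD θ) θ := by
  have h : ∀ a : A, HasFDerivAt (fun ϑ : EuclideanSpace ℝ A => Real.exp (ϑ a))
      (Real.exp (θ a) • (EuclideanSpace.proj (𝕜 := ℝ) a)) θ := fun a =>
    (EuclideanSpace.proj (𝕜 := ℝ) a).hasFDerivAt.exp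
  exact HasFDerivAt.fun_sum (fun a (_ : a ∈ Finset.univ) => h a)

lemma hasFDerivAt_Zinv (θ : EuclideanSpace ℝ A) :
    HasFDerivAt (fun ϑ => (Zf ϑ)⁻¹) ((-((Zf θ)^2)⁻¹) • ZD θ) θ :=
  (hasDerivAt_inv (Zf_pos θ).ne').comp_hasFDerivAt θ (hasFDerivAt_Zf θ)

noncomputable def SD (c : A → ℝ) (θ : EuclideanSpace ℝ A) : EuclideanSpace ℝ A →L[ℝ] ℝ :=
  ∑ a, (Real.exp (θ a) * c a) • (EuclideanSpace.proj a)

lemma hasFDerivAt_Sf (c : A → ℝ) (θ : EuclideanSpace ℝ A) :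
    HasFDerivAt (Sf c) (SD c θ) θ := by
  refine HasFDerivAt.fun_sum fun a _ => ?_
  have := ((EuclideanSpace.proj (𝕜 := ℝ) a).hasFDerivAt.exp (x := θ)).mul_const (c a)
  refine this.congr_fderiv ?_
  symm
  ext v
  simp only [ContinuousLinearMap.smul_apply, ContinuousLinearMap.coe_smul', Pi.smul_apply,
    PiLp.proj_apply, smul_eq_mul]
  ring

lemma mf_eq (c : A → ℝ) (θ : EuclideanSpace ℝ A) : mf c θ = Sf c θ * (Zf θ)⁻¹ := by
  simp only [mf, sm, Sf, Finset.sum_mul, PiLp.toLp_apply]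
  exact Finset.sum_congr rfl fun a _ => by ring

lemma hasGradientAt_F (c : A → ℝ) (θ : EuclideanSpace ℝ A) :
    HasGradientAt (fun ϑ => Sf c ϑ * (Zf ϑ)⁻¹) (Gf c θ) θ := by
  have hF := (hasFDerivAt_Sf c θ).fun_mul (hasFDerivAt_Zinv θ)
  rw [hasGradientAt_iff_hasFDerivAt]
  refine hF.congr_fderiv ?_
  symm
  ext v
  have hZ := (Zf_pos θ).ne'
  simp only [InnerProductSpace.toDual_apply_apply, PiLp.inner_apply, RCLike.inner_apply, conj_trivial,
    ContinuousLinearMap.add_apply, ContinuousLinearMap.smul_apply, smul_eq_mul, SD, ZD,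
    ContinuousLinearMap.sum_apply, PiLp.proj_apply, Gf, sm, mf_eq, PiLp.toLp_apply]
  rw [Finset.mul_sum, Finset.mul_sum, Finset.mul_sum, ← Finset.sum_add_distrib]
  refine Finset.sum_congr rfl fun a _ => ?_
  field_simp
  ring

noncomputable def PD (θ : EuclideanSpace ℝ A) : EuclideanSpace ℝ A →L[ℝ] ℝ :=
  ∑ b, sm θ b • (EuclideanSpace.proj b)

noncomputable def JD (θ : EuclideanSpace ℝ A) :
    EuclideanSpace ℝ A →L[ℝ] EuclideanSpace ℝ A :=
  ((EuclideanSpace.equiv A ℝ).symm.toContinuousLinearMap).comp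
    (ContinuousLinearMap.pi (fun a => sm θ a • ((EuclideanSpace.proj a) - PD θ)))

lemma JD_apply (θ v : EuclideanSpace ℝ A) (a : A) :
    JD θ v a = sm θ a * (v a - ∑ b, sm θ b * v b) := by
  simp [JD, PD, ContinuousLinearMap.pi_apply, ContinuousLinearMap.sum_apply,
    PiLp.proj_apply]

lemma hasFDerivAt_sm_comp (θ : EuclideanSpace ℝ A) (a : A) :
    HasFDerivAt (fun ϑ : EuclideanSpace ℝ A => sm ϑ a)
      (sm θ a • ((EuclideanSpace.proj (𝕜 := ℝ) a) - PD θ)) θ := by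
  have h := ((EuclideanSpace.proj (𝕜 := ℝ) a).hasFDerivAt (x := θ)).exp.fun_mul
    (hasFDerivAt_Zinv θ)
  have hZ := (Zf_pos θ).ne'
  refine h.congr_fderiv ?_
  symm
  ext v
  simp only [ContinuousLinearMap.smul_apply, ContinuousLinearMap.sub_apply,
    ContinuousLinearMap.add_apply, smul_eq_mul, PD, ZD, ContinuousLinearMap.sum_apply,
    PiLp.proj_apply, sm, PiLp.toLp_apply]
  have key : ∑ b, Real.exp (θ b) * (Zf θ)⁻¹ * v b
      = (∑ b, Real.exp (θ b) * v b) * (Zf θ)⁻¹ := by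
    rw [Finset.sum_mul]
    exact Finset.sum_congr rfl fun b _ => by ring
  rw [key]
  field_simp
  ring

lemma hasFDerivAt_sm (θ : EuclideanSpace ℝ A) : HasFDerivAt sm (JD θ) θ := by
  have hpi : HasFDerivAt (fun ϑ : EuclideanSpace ℝ A => (fun a => sm ϑ a : A → ℝ))
      (ContinuousLinearMap.pi (fun a => sm θ a • ((EuclideanSpace.proj (𝕜 := ℝ) a) - PD θ))) θ := by
    refine hasFDerivAt_pi'' fun a => ?_
    rw [ContinuousLinearMap.proj_pi]
    exact hasFDerivAt_sm_comp θ a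
  exact ((EuclideanSpace.equiv A ℝ).symm.toContinuousLinearMap.hasFDerivAt).comp θ hpi

lemma norm_JD_le (θ : EuclideanSpace ℝ A) : ‖JD θ‖ ≤ 2 := by
  refine ContinuousLinearMap.opNorm_le_bound _ (by norm_num) fun v => ?_
  set t := ∑ b, sm θ b * v b with ht
  have hdec : JD θ v = (show EuclideanSpace ℝ A from WithLp.toLp 2 fun a => sm θ a * v a) - t • sm θ := by
    ext a
    simp [JD_apply, PiLp.sub_apply, PiLp.smul_apply, mul_sub, ht]
    ring
  have hx : ‖(show EuclideanSpace ℝ A from WithLp.toLp 2 fun a => sm θ a * v a)‖ ≤ ‖v‖ := by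
    refine euclid_norm_le (norm_nonneg v) ?_
    rw [euclid_norm_sq v]
    refine Finset.sum_le_sum fun a _ => ?_
    show (sm θ a * v a)^2 ≤ (v a)^2
    have h1 := sm_le_one θ a
    have h0 := sm_nonneg θ a
    have h2 : sm θ a ^ 2 ≤ 1 := by nlinarith
    rw [mul_pow]
    nlinarith [mul_nonneg (sub_nonneg.2 h2) (sq_nonneg (v a))]
  have hts : t = inner (𝕜 := ℝ) (sm θ) v := by
    simp [PiLp.inner_apply, RCLike.inner_apply, ht, mul_comm]
  have htle : |t| ≤ ‖v‖ := by
    rw [hts]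
    refine (abs_real_inner_le_norm _ _).trans ?_
    have h1 := norm_sm_le_one θ
    have h3 := norm_nonneg v
    nlinarith
  calc ‖JD θ v‖ ≤ ‖(show EuclideanSpace ℝ A from WithLp.toLp 2 fun a => sm θ a * v a)‖ + ‖t • sm θ‖ := by
        rw [hdec]; exact norm_sub_le _ _
  _ ≤ ‖v‖ + |t| * ‖sm θ‖ := by
      rw [norm_smul, Real.norm_eq_abs]
      exact add_le_add hx le_rfl
  _ ≤ ‖v‖ + ‖v‖ * 1 := by
      have h1 := norm_sm_le_one θ
      have h2 := abs_nonneg t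
      have h3 := norm_nonneg v
      nlinarith
  _ = 2 * ‖v‖ := by ring

lemma abs_mf_le {c : A → ℝ} {M : ℝ} (hM : ∀ a, |c a| ≤ M) (θ : EuclideanSpace ℝ A) :
    |mf c θ| ≤ M := by
  calc |mf c θ| ≤ ∑ a, |sm θ a * c a| := Finset.abs_sum_le_sum_abs _ _
  _ ≤ ∑ a, sm θ a * M := by
      refine Finset.sum_le_sum fun a _ => ?_
      rw [abs_mul, abs_of_nonneg (sm_nonneg θ a)]
      exact mul_le_mul_of_nonneg_left (hM a) (sm_nonneg θ a)
  _ = M := by rw [← Finset.sum_mul, sm_sum, one_mul]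

lemma norm_Gf_le {c : A → ℝ} {M : ℝ} (hM : ∀ a, |c a| ≤ M) (θ : EuclideanSpace ℝ A) :
    ‖Gf c θ‖ ≤ M := by
  have hM0 : 0 ≤ M := le_trans (abs_nonneg _) (hM (Classical.arbitrary A))
  refine euclid_norm_le hM0 ?_
  have step1 : ∑ a, (Gf c θ a)^2 ≤ ∑ a, sm θ a * (c a - mf c θ)^2 := by
    refine Finset.sum_le_sum fun a _ => ?_
    show (sm θ a * (c a - mf c θ))^2 ≤ _
    have h1 := sm_le_one θ a
    have h0 := sm_nonneg θ a
    have h2 : sm θ a ^ 2 ≤ sm θ a := by nlinarith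
    rw [mul_pow]
    nlinarith [mul_nonneg (sub_nonneg.2 h2) (sq_nonneg (c a - mf c θ))]
  have step2 : ∑ a, sm θ a * (c a - mf c θ)^2
      = (∑ a, sm θ a * (c a)^2) - (mf c θ)^2 := by
    have h1 : ∑ a, sm θ a * c a = mf c θ := rfl
    calc ∑ a, sm θ a * (c a - mf c θ)^2
        = ∑ a, (sm θ a * (c a)^2 - 2 * mf c θ * (sm θ a * c a)
            + (mf c θ)^2 * sm θ a) := Finset.sum_congr rfl fun a _ => by ring
    _ = (∑ a, sm θ a * (c a)^2) - 2 * mf c θ * (∑ a, sm θ a * c a)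
        + (mf c θ)^2 * (∑ a, sm θ a) := by
          rw [Finset.sum_add_distrib, Finset.sum_sub_distrib, ← Finset.mul_sum, ← Finset.mul_sum]
    _ = _ := by rw [h1, sm_sum]; ring
  have step3 : ∑ a, sm θ a * (c a)^2 ≤ M^2 := by
    calc ∑ a, sm θ a * (c a)^2 ≤ ∑ a, sm θ a * M^2 := by
          refine Finset.sum_le_sum fun a _ => ?_
          refine mul_le_mul_of_nonneg_left ?_ (sm_nonneg θ a)
          rw [← sq_abs]
          exact pow_le_pow_left₀ (abs_nonneg _) (hM a) 2
    _ = M^2 := by rw [← Finset.sum_mul, sm_sum, one_mul]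
  nlinarith [sq_nonneg (mf c θ)]

lemma sm_lip (θ θ' : EuclideanSpace ℝ A) : ‖sm θ - sm θ'‖ ≤ 2 * ‖θ - θ'‖ :=
  Convex.norm_image_sub_le_of_norm_hasFDerivWithin_le
    (fun x _ => (hasFDerivAt_sm x).hasFDerivWithinAt)
    (fun x _ => norm_JD_le x) convex_univ (Set.mem_univ θ') (Set.mem_univ θ)

lemma mf_lip {c : A → ℝ} {M : ℝ} (hM : ∀ a, |c a| ≤ M) (θ θ' : EuclideanSpace ℝ A) :
    |mf c θ - mf c θ'| ≤ M * ‖θ - θ'‖ := by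
  have key : ∀ x : EuclideanSpace ℝ A, HasFDerivWithinAt (fun ϑ => Sf c ϑ * (Zf ϑ)⁻¹)
      (InnerProductSpace.toDual ℝ (EuclideanSpace ℝ A) (Gf c x)) Set.univ x := fun x =>
    ((hasGradientAt_iff_hasFDerivAt.1 (hasGradientAt_F c x))).hasFDerivWithinAt
  have bound : ∀ x : EuclideanSpace ℝ A,
      ‖InnerProductSpace.toDual ℝ (EuclideanSpace ℝ A) (Gf c x)‖ ≤ M := fun x => by
    rw [(InnerProductSpace.toDual ℝ (EuclideanSpace ℝ A)).norm_map]
    exact norm_Gf_le hM x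
  have h := Convex.norm_image_sub_le_of_norm_hasFDerivWithin_le
    (fun x _ => key x) (fun x _ => bound x) convex_univ (Set.mem_univ θ') (Set.mem_univ θ)
  rw [mf_eq, mf_eq]
  simpa [Real.norm_eq_abs] using h

end SoftmaxSmoothAux

/-- **Smoothness of linear functionals of the softmax.** For a finite set `A` and
`c ∈ ℝ^A`, the function `F(θ) = ∑_a softmax(θ)_a c_a` has `5‖c‖_∞`-Lipschitz
gradient in the Euclidean norm. -/
theorem softmax_linear_functional_smooth (A : Type) [Fintype A] (c : A → ℝ) :
    ∀ θ θ' : EuclideanSpace ℝ A,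
      ‖gradient (fun ϑ : EuclideanSpace ℝ A =>
            ∑ a, Real.exp (ϑ a) / (∑ a', Real.exp (ϑ a')) * c a) θ -
          gradient (fun ϑ : EuclideanSpace ℝ A =>
            ∑ a, Real.exp (ϑ a) / (∑ a', Real.exp (ϑ a')) * c a) θ'‖ ≤
        5 * (⨆ a, |c a|) * ‖θ - θ'‖ := by
  intro θ θ'
  rcases isEmpty_or_nonempty A with hA | hA
  · haveI : Subsingleton (EuclideanSpace ℝ A) :=
      ⟨fun a b => PiLp.ext fun x => isEmptyElim x⟩
    have hθ : θ = θ' := Subsingleton.elim _ _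
    subst hθ
    simp
  · set M := ⨆ a, |c a| with hMdef
    have hM : ∀ a, |c a| ≤ M := fun a =>
      le_ciSup (f := fun a => |c a|) (Set.Finite.bddAbove (Set.finite_range _)) a
    have hM0 : 0 ≤ M := le_trans (abs_nonneg _) (hM (Classical.arbitrary A))
    have hfun : (fun ϑ : EuclideanSpace ℝ A =>
        ∑ a, Real.exp (ϑ a) / (∑ a', Real.exp (ϑ a')) * c a)
        = fun ϑ => Sf c ϑ * (Zf ϑ)⁻¹ := by
      funext ϑ
      simp only [Sf, Zf, Finset.sum_mul, div_eq_mul_inv]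
      exact Finset.sum_congr rfl fun a _ => by ring
    rw [hfun, (hasGradientAt_F c θ).gradient, (hasGradientAt_F c θ').gradient]
    have hdecomp : Gf c θ - Gf c θ' =
        ((show EuclideanSpace ℝ A from WithLp.toLp 2 fun a => (sm θ a - sm θ' a) * c a)
        + (-(mf c θ)) • (sm θ - sm θ')) + (mf c θ' - mf c θ) • sm θ' := by
      ext a
      simp [Gf, PiLp.sub_apply, PiLp.add_apply, PiLp.smul_apply]
      ring
    have h1 : ‖(show EuclideanSpace ℝ A from WithLp.toLp 2 fun a => (sm θ a - sm θ' a) * c a)‖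
        ≤ M * (2 * ‖θ - θ'‖) := by
      have ha : ‖(show EuclideanSpace ℝ A from WithLp.toLp 2 fun a => (sm θ a - sm θ' a) * c a)‖
          ≤ M * ‖sm θ - sm θ'‖ := by
        refine euclid_norm_le (mul_nonneg hM0 (norm_nonneg _)) ?_
        rw [mul_pow, euclid_norm_sq]
        rw [Finset.mul_sum]
        refine Finset.sum_le_sum fun a _ => ?_
        show ((sm θ a - sm θ' a) * c a)^2 ≤ _
        have hsub : (sm θ - sm θ') a = sm θ a - sm θ' a := rfl
        rw [hsub, mul_pow]
        have hca : (c a)^2 ≤ M^2 := by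
          rw [← sq_abs]
          exact pow_le_pow_left₀ (abs_nonneg _) (hM a) 2
        nlinarith [sq_nonneg (sm θ a - sm θ' a)]
      refine ha.trans ?_
      exact mul_le_mul_of_nonneg_left (sm_lip θ θ') hM0
    have h2 : ‖(-(mf c θ)) • (sm θ - sm θ')‖ ≤ M * (2 * ‖θ - θ'‖) := by
      rw [norm_smul, Real.norm_eq_abs, abs_neg]
      have ha := abs_mf_le hM θ
      have hb := sm_lip θ θ'
      nlinarith [norm_nonneg (sm θ - sm θ'), abs_nonneg (mf c θ), norm_nonneg (θ - θ')]
    have h3 : ‖(mf c θ' - mf c θ) • sm θ'‖ ≤ M * ‖θ - θ'‖ := by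
      rw [norm_smul, Real.norm_eq_abs]
      have ha : |mf c θ' - mf c θ| ≤ M * ‖θ' - θ‖ := mf_lip hM θ' θ
      rw [norm_sub_rev θ' θ] at ha
      have hb := norm_sm_le_one θ'
      nlinarith [abs_nonneg (mf c θ' - mf c θ), norm_nonneg (sm θ')]
    calc ‖Gf c θ - Gf c θ'‖
        ≤ ‖(show EuclideanSpace ℝ A from WithLp.toLp 2 fun a => (sm θ a - sm θ' a) * c a)
            + (-(mf c θ)) • (sm θ - sm θ')‖ + ‖(mf c θ' - mf c θ) • sm θ'‖ := by
          rw [hdecomp]; exact norm_add_le _ _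
    _ ≤ (‖(show EuclideanSpace ℝ A from WithLp.toLp 2 fun a => (sm θ a - sm θ' a) * c a)‖
          + ‖(-(mf c θ)) • (sm θ - sm θ')‖) + ‖(mf c θ' - mf c θ) • sm θ'‖ :=
        add_le_add_left (norm_add_le _ _) _
    _ ≤ (M * (2 * ‖θ - θ'‖) + M * (2 * ‖θ - θ'‖)) + M * ‖θ - θ'‖ :=
        add_le_add (add_le_add h1 h2) h3
    _ = 5 * M * ‖θ - θ'‖ := by ring
end

section
/- (Second-derivative bound along a direction for a smoothly parameterized policy) Consider a finite discounted MDP, a fixed state s₀, a parameterized family of stochastic policies θ ↦ π_θ (θ ∈ ℝ^d) and a unit vector u ∈ ℝ^d; set π_α := π_{θ+αu} and Ṽ(α) := V^{π_α}(s₀), assuming α ↦ π_α(a|s) is twice differentiable for all s,a. If for every state s: Σ_{a∈A} |d π_α(a|s)/dα|_{α=0}| ≤ C₁ and Σ_{a∈A} |d² π_α(a|s)/dα²|_{α=0}| ≤ C₂, then |d² Ṽ(α)/dα²|_{α=0}| ≤ C₂/(1−γ)² + 2γC₁²/(1−γ)³. -/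
open scoped BigOperators InnerProductSpace

open scoped NNReal

section MatrixAux

variable {n : Type*} [Fintype n] [DecidableEq n]

attribute [local instance] Matrix.linftyOpNormedRing Matrix.linftyOpNormedAlgebra

lemma rowSum_le_norm (A : Matrix n n ℝ) (i : n) : ∑ j, |A i j| ≤ ‖A‖ := by
  rw [Matrix.linfty_opNorm_def]
  have h : (∑ j, ‖A i j‖₊ : ℝ≥0) ≤ Finset.univ.sup fun i => ∑ j, ‖A i j‖₊ :=
    Finset.le_sup (f := fun i => ∑ j, ‖A i j‖₊) (Finset.mem_univ i)
  calc ∑ j, |A i j| = ((∑ j, ‖A i j‖₊ : ℝ≥0) : ℝ) := by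
        push_cast; simp [Real.norm_eq_abs]
    _ ≤ _ := by exact_mod_cast h

lemma entry_abs_le_norm (A : Matrix n n ℝ) (i j : n) : |A i j| ≤ ‖A‖ :=
  le_trans (Finset.single_le_sum (fun k _ => abs_nonneg (A i k)) (Finset.mem_univ j))
    (rowSum_le_norm A i)

lemma norm_le_of_rowSums {A : Matrix n n ℝ} {c : ℝ} (hc : 0 ≤ c)
    (h : ∀ i, ∑ j, |A i j| ≤ c) : ‖A‖ ≤ c := by
  rw [Matrix.linfty_opNorm_def]
  have key : (Finset.univ.sup fun i => ∑ j, ‖A i j‖₊) ≤ (⟨c, hc⟩ : ℝ≥0) := by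
    refine Finset.sup_le fun i _ => ?_
    apply NNReal.coe_le_coe.mp
    calc ((∑ j, ‖A i j‖₊ : ℝ≥0) : ℝ) = ∑ j, |A i j| := by push_cast; simp [Real.norm_eq_abs]
      _ ≤ c := h i
  exact_mod_cast key

lemma hasDerivAt_matrix {f : ℝ → Matrix n n ℝ} {f' : Matrix n n ℝ} {x : ℝ}
    (h : ∀ i j, HasDerivAt (fun α => f α i j) (f' i j) x) : HasDerivAt f f' x := by
  have key : ∀ g : Matrix n n ℝ,
      g = ∑ i : n, ∑ j : n, g i j • Matrix.single i j (1 : ℝ) := by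
    intro g
    conv_lhs => rw [Matrix.matrix_eq_sum_single g]
    simp [Matrix.smul_single, smul_eq_mul]
  have h2 : f = fun α => ∑ i : n, ∑ j : n, f α i j • Matrix.single i j (1 : ℝ) :=
    funext fun α => key (f α)
  rw [h2, key f']
  exact HasDerivAt.fun_sum fun i _ => HasDerivAt.fun_sum fun j _ => (h i j).smul_const _

lemma hasDerivAt_entry {f : ℝ → Matrix n n ℝ} {f' : Matrix n n ℝ} {x : ℝ}
    (h : HasDerivAt f f' x) (i j : n) : HasDerivAt (fun α => f α i j) (f' i j) x := by
  have := ((Matrix.entryLinearMap ℝ ℝ i j).toContinuousLinearMap).hasFDerivAt.comp_hasDerivAt x h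
  exact this

end MatrixAux

section MDPAux

attribute [local instance] Matrix.linftyOpNormedRing Matrix.linftyOpNormedAlgebra

variable (M : FinMDP)

/-- `rowMat v` is the matrix whose every column is `v`. -/
noncomputable def FinMDP.rowMat (v : M.S → ℝ) : Matrix M.S M.S ℝ := Matrix.of fun s _ => v s

lemma FinMDP.norm_rowMat_mul_le {c : ℝ} (hc : 0 ≤ c) (A : Matrix M.S M.S ℝ) (v : M.S → ℝ)
    (hv : ∀ s, |v s| ≤ c) (i j : M.S) : |(A * M.rowMat v) i j| ≤ ‖A‖ * c := by
  calc |(A * M.rowMat v) i j| = |∑ s, A i s * v s| := by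
        simp [Matrix.mul_apply, FinMDP.rowMat]
    _ ≤ ∑ s, |A i s * v s| := Finset.abs_sum_le_sum_abs _ _
    _ ≤ ∑ s, |A i s| * c := by
        refine Finset.sum_le_sum fun s _ => ?_
        rw [abs_mul]
        exact mul_le_mul_of_nonneg_left (hv s) (abs_nonneg _)
    _ = (∑ s, |A i s|) * c := by rw [Finset.sum_mul]
    _ ≤ ‖A‖ * c := mul_le_mul_of_nonneg_right (rowSum_le_norm A i) hc

lemma FinMDP.norm_Pmat_le (hM : M.Valid) (π : M.S → M.A → ℝ) (hπ : M.IsPolicy π) :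
    ‖M.Pmat π‖ ≤ 1 := by
  refine norm_le_of_rowSums zero_le_one fun s => ?_
  have h1 : ∀ s', |(M.Pmat π) s s'| = ∑ a, π s a * M.P s a s' := fun s' =>
    abs_of_nonneg (Finset.sum_nonneg fun a _ =>
      mul_nonneg (hπ.1 s a) (hM.1 s a s'))
  calc ∑ s', |(M.Pmat π) s s'| = ∑ s', ∑ a, π s a * M.P s a s' := by simp [h1]
    _ = ∑ a, π s a * ∑ s', M.P s a s' := by
        rw [Finset.sum_comm]; simp [Finset.mul_sum]
    _ = ∑ a, π s a := by simp [hM.2.1]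
    _ ≤ 1 := le_of_eq (hπ.2 s)

lemma FinMDP.norm_smul_Pmat_lt (hM : M.Valid) (π : M.S → M.A → ℝ) (hπ : M.IsPolicy π) :
    ‖M.γ • M.Pmat π‖ < 1 := by
  have h0 : 0 ≤ M.γ := hM.2.2.2.1
  have h1 : M.γ < 1 := hM.2.2.2.2
  calc ‖M.γ • M.Pmat π‖ = |M.γ| * ‖M.Pmat π‖ := by rw [norm_smul]; rfl
    _ ≤ M.γ * 1 := by
        rw [abs_of_nonneg h0]
        exact mul_le_mul_of_nonneg_left (M.norm_Pmat_le hM π hπ) h0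
    _ < 1 := by linarith

lemma FinMDP.norm_inverse_le (hM : M.Valid) (π : M.S → M.A → ℝ) (hπ : M.IsPolicy π) :
    ‖(Ring.inverse (1 - M.γ • M.Pmat π) : Matrix M.S M.S ℝ)‖ ≤ (1 - M.γ)⁻¹ := by
  have h0 : 0 ≤ M.γ := hM.2.2.2.1
  have h1 : M.γ < 1 := hM.2.2.2.2
  have hx : ‖M.γ • M.Pmat π‖ < 1 := M.norm_smul_Pmat_lt hM π hπ
  rw [← geom_series_eq_inverse _ hx]
  have hpow : ∀ t : ℕ, ‖(M.γ • M.Pmat π) ^ t‖ ≤ M.γ ^ t := by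
    intro t
    cases t with
    | zero =>
      simp only [pow_zero]
      refine norm_le_of_rowSums zero_le_one fun i => ?_
      have he : ∀ x, |(1 : Matrix M.S M.S ℝ) i x| = if i = x then 1 else 0 := fun x => by
        simp [Matrix.one_apply, apply_ite abs]
      simp [he]
    | succ k =>
      calc ‖(M.γ • M.Pmat π) ^ (k+1)‖ ≤ ‖M.γ • M.Pmat π‖ ^ (k+1) :=
            norm_pow_le' _ (Nat.succ_pos k)
        _ ≤ M.γ ^ (k+1) := by
            refine pow_le_pow_left₀ (norm_nonneg _) ?_ _
            calc ‖M.γ • M.Pmat π‖ = |M.γ| * ‖M.Pmat π‖ := by rw [norm_smul]; rfl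
              _ ≤ M.γ * 1 := by
                  rw [abs_of_nonneg h0]
                  exact mul_le_mul_of_nonneg_left (M.norm_Pmat_le hM π hπ) h0
              _ = M.γ := mul_one _
  exact tsum_of_norm_bounded (hasSum_geometric_of_lt_one h0 h1) hpow

lemma FinMDP.V_eq_inverse_entry (hM : M.Valid) (π : M.S → M.A → ℝ) (hπ : M.IsPolicy π)
    (s₀ : M.S) :
    M.V π s₀ = ((Ring.inverse (1 - M.γ • M.Pmat π) : Matrix M.S M.S ℝ)
      * M.rowMat (M.rPol π)) s₀ s₀ := by
  have hx : ‖M.γ • M.Pmat π‖ < 1 := M.norm_smul_Pmat_lt hM π hπ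
  have hsum : Summable fun t : ℕ => (M.γ • M.Pmat π) ^ t :=
    summable_geometric_of_norm_lt_one hx
  set φ : Matrix M.S M.S ℝ →L[ℝ] ℝ :=
    LinearMap.toContinuousLinearMap
      ((Matrix.entryLinearMap ℝ ℝ s₀ s₀).comp
        (LinearMap.mulRight ℝ (M.rowMat (M.rPol π)))) with hφ
  have hterm : ∀ t : ℕ, M.γ ^ t * ((M.Pmat π ^ t).mulVec (M.rPol π)) s₀
      = φ ((M.γ • M.Pmat π) ^ t) := by
    intro t
    simp only [hφ, LinearMap.coe_toContinuousLinearMap', LinearMap.coe_comp,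
      Function.comp_apply, LinearMap.mulRight_apply, Matrix.entryLinearMap_apply,
      smul_pow]
    simp only [Matrix.mul_apply, Matrix.mulVec, dotProduct, FinMDP.rowMat,
      Matrix.of_apply, Finset.mul_sum]
    exact Finset.sum_congr rfl fun i _ => (mul_assoc _ _ _).symm
  calc M.V π s₀ = ∑' t : ℕ, φ ((M.γ • M.Pmat π) ^ t) := by
        rw [FinMDP.V]; exact tsum_congr hterm
    _ = φ (∑' t : ℕ, (M.γ • M.Pmat π) ^ t) := (φ.map_tsum hsum).symm
    _ = _ := by
        rw [show (∑' t : ℕ, (M.γ • M.Pmat π) ^ t) = Ring.inverse (1 - M.γ • M.Pmat π) from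
          geom_series_eq_inverse _ hx]
        simp [hφ]

end MDPAux

lemma rhs_arith (γ C₁ C₂ : ℝ) (hne : (1:ℝ) - γ ≠ 0) :
    γ * ((γ * ((1 - γ)⁻¹ * C₁ * (1 - γ)⁻¹) * C₁
      + (1 - γ)⁻¹ * C₂) * (1 - γ)⁻¹
      + (1 - γ)⁻¹ * C₁ * (γ * ((1 - γ)⁻¹ * C₁ * (1 - γ)⁻¹)))
      + γ * ((1 - γ)⁻¹ * C₁ * (1 - γ)⁻¹) * C₁
      + (γ * ((1 - γ)⁻¹ * C₁ * (1 - γ)⁻¹) * C₁ + (1 - γ)⁻¹ * C₂)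
      = C₂ / (1 - γ) ^ 2 + 2 * γ * C₁ ^ 2 / (1 - γ) ^ 3 := by
  field_simp
  ring

/-- **Second-derivative bound along a direction for a smoothly parameterized policy.** -/
theorem second_derivative_bound_along_direction (M : FinMDP) (hM : M.Valid)
    (s₀ : M.S) (d : ℕ)
    (π : EuclideanSpace ℝ (Fin d) → M.S → M.A → ℝ)
    (hpolicy : ∀ ϑ, M.IsPolicy (π ϑ))
    (θ u : EuclideanSpace ℝ (Fin d)) (hu : ‖u‖ = 1)
    (hdiff : ∀ s a, Differentiable ℝ (fun α : ℝ => π (θ + α • u) s a))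
    (hdiff2 : ∀ s a, Differentiable ℝ (deriv (fun α : ℝ => π (θ + α • u) s a)))
    (C₁ C₂ : ℝ)
    (hC₁ : ∀ s, ∑ a, |deriv (fun α : ℝ => π (θ + α • u) s a) 0| ≤ C₁)
    (hC₂ : ∀ s, ∑ a, |deriv (deriv (fun α : ℝ => π (θ + α • u) s a)) 0| ≤ C₂) :
    |deriv (deriv (fun α : ℝ => M.V (π (θ + α • u)) s₀)) 0| ≤
      C₂ / (1 - M.γ) ^ 2 + 2 * M.γ * C₁ ^ 2 / (1 - M.γ) ^ 3 := by
  classical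
  letI : NormedRing (Matrix M.S M.S ℝ) := Matrix.linftyOpNormedRing
  letI : NormedAlgebra ℝ (Matrix M.S M.S ℝ) := Matrix.linftyOpNormedAlgebra
  have hγ0 : 0 ≤ M.γ := hM.2.2.2.1
  have hγ1 : M.γ < 1 := hM.2.2.2.2
  have hκpos : (0:ℝ) < 1 - M.γ := by linarith
  -- scalar derivative facts
  have hdp : ∀ (s : M.S) (a : M.A) (α : ℝ),
      HasDerivAt (fun α : ℝ => π (θ + α • u) s a)
        (deriv (fun α : ℝ => π (θ + α • u) s a) α) α :=
    fun s a α => ((hdiff s a) α).hasDerivAt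
  have hdp2 : ∀ (s : M.S) (a : M.A) (α : ℝ),
      HasDerivAt (deriv (fun α : ℝ => π (θ + α • u) s a))
        (deriv (deriv (fun α : ℝ => π (θ + α • u) s a)) α) α :=
    fun s a α => ((hdiff2 s a) α).hasDerivAt
  -- matrix-valued functions
  set Pm : ℝ → Matrix M.S M.S ℝ := fun α => M.Pmat (π (θ + α • u)) with hPm_def
  set P₁ : ℝ → Matrix M.S M.S ℝ := fun α => Matrix.of fun s s' =>
    ∑ a, deriv (fun α : ℝ => π (θ + α • u) s a) α * M.P s a s' with hP₁_def
  set P₂ : ℝ → Matrix M.S M.S ℝ := fun α => Matrix.of fun s s' =>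
    ∑ a, deriv (deriv (fun α : ℝ => π (θ + α • u) s a)) α * M.P s a s' with hP₂_def
  have hPm : ∀ α, HasDerivAt Pm (P₁ α) α := by
    intro α
    refine hasDerivAt_matrix fun s s' => ?_
    have := HasDerivAt.fun_sum (fun (a : M.A) (_ : a ∈ Finset.univ) =>
      (hdp s a α).mul_const (M.P s a s'))
    simpa [hPm_def, hP₁_def, FinMDP.Pmat] using this
  have hP₁d : ∀ α, HasDerivAt P₁ (P₂ α) α := by
    intro α
    refine hasDerivAt_matrix fun s s' => ?_
    have := HasDerivAt.fun_sum (fun (a : M.A) (_ : a ∈ Finset.univ) =>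
      (hdp2 s a α).mul_const (M.P s a s'))
    simpa [hP₁_def, hP₂_def] using this
  -- the resolvent and its derivatives
  have hxlt : ∀ α : ℝ, ‖M.γ • Pm α‖ < 1 := fun α =>
    M.norm_smul_Pmat_lt hM _ (hpolicy _)
  set Minv : ℝ → Matrix M.S M.S ℝ := fun α => Ring.inverse (1 - M.γ • Pm α) with hMinv_def
  have hMinvle : ∀ α, ‖Minv α‖ ≤ (1 - M.γ)⁻¹ := fun α =>
    M.norm_inverse_le hM _ (hpolicy _)
  set Minv₁ : ℝ → Matrix M.S M.S ℝ := fun α => M.γ • (Minv α * P₁ α * Minv α) with hMinv₁_def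
  have hMinv : ∀ α, HasDerivAt Minv (Minv₁ α) α := by
    intro α
    have hFd : HasDerivAt (fun α : ℝ => 1 - M.γ • Pm α) (-(M.γ • P₁ α)) α := by
      exact (HasDerivAt.const_sub 1 ((hPm α).const_smul M.γ))
    set xu : (Matrix M.S M.S ℝ)ˣ := Units.oneSub (M.γ • Pm α) (hxlt α) with hxu
    have hcomp := (hasFDerivAt_ringInverse (𝕜 := ℝ) xu).comp_hasDerivAt α hFd
    have hval : (↑xu⁻¹ : Matrix M.S M.S ℝ) = Minv α := (Ring.inverse_unit xu).symm
    have heq : ((-ContinuousLinearMap.mulLeftRight ℝ (Matrix M.S M.S ℝ) ↑xu⁻¹ ↑xu⁻¹)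
        (-(M.γ • P₁ α))) = Minv₁ α := by
      simp [ContinuousLinearMap.mulLeftRight_apply, hval, hMinv₁_def,
        mul_smul_comm, smul_mul_assoc]
    rw [heq] at hcomp
    exact hcomp
  set Minv₂ : ℝ → Matrix M.S M.S ℝ := fun α =>
    M.γ • ((Minv₁ α * P₁ α + Minv α * P₂ α) * Minv α + Minv α * P₁ α * Minv₁ α)
    with hMinv₂_def
  have hMinv₁d : ∀ α, HasDerivAt Minv₁ (Minv₂ α) α := fun α =>
    ((((hMinv α).mul (hP₁d α)).mul (hMinv α)).const_smul M.γ)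
  -- reward vectors
  set r₁ : ℝ → M.S → ℝ := fun α s =>
    ∑ a, deriv (fun α : ℝ => π (θ + α • u) s a) α * M.r s a with hr₁_def
  set r₂ : ℝ → M.S → ℝ := fun α s =>
    ∑ a, deriv (deriv (fun α : ℝ => π (θ + α • u) s a)) α * M.r s a with hr₂_def
  set Rm0 : ℝ → Matrix M.S M.S ℝ := fun α => M.rowMat (M.rPol (π (θ + α • u))) with hRm0_def
  have hRm : ∀ α, HasDerivAt Rm0 (M.rowMat (r₁ α)) α := by
    intro α
    refine hasDerivAt_matrix fun s s' => ?_
    have := HasDerivAt.fun_sum (fun (a : M.A) (_ : a ∈ Finset.univ) =>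
      (hdp s a α).mul_const (M.r s a))
    simpa [hRm0_def, hr₁_def, FinMDP.rowMat, FinMDP.rPol] using this
  have hRm₁ : ∀ α, HasDerivAt (fun α => M.rowMat (r₁ α)) (M.rowMat (r₂ α)) α := by
    intro α
    refine hasDerivAt_matrix fun s s' => ?_
    have := HasDerivAt.fun_sum (fun (a : M.A) (_ : a ∈ Finset.univ) =>
      (hdp2 s a α).mul_const (M.r s a))
    simpa [hr₁_def, hr₂_def, FinMDP.rowMat] using this
  -- rewrite V
  have hVeq : (fun α : ℝ => M.V (π (θ + α • u)) s₀) = fun α => (Minv α * Rm0 α) s₀ s₀ :=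
    funext fun α => M.V_eq_inverse_entry hM _ (hpolicy _) s₀
  rw [hVeq]
  have hW : ∀ α : ℝ, HasDerivAt (fun α => (Minv α * Rm0 α) s₀ s₀)
      ((Minv₁ α * Rm0 α + Minv α * M.rowMat (r₁ α)) s₀ s₀) α := fun α =>
    hasDerivAt_entry ((hMinv α).mul (hRm α)) s₀ s₀
  have hderiv1 : deriv (fun α => (Minv α * Rm0 α) s₀ s₀)
      = fun α => (Minv₁ α * Rm0 α + Minv α * M.rowMat (r₁ α)) s₀ s₀ :=
    funext fun α => (hW α).deriv
  rw [hderiv1]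
  have hW2 : HasDerivAt (fun α => (Minv₁ α * Rm0 α + Minv α * M.rowMat (r₁ α)) s₀ s₀)
      ((Minv₂ 0 * Rm0 0 + Minv₁ 0 * M.rowMat (r₁ 0)
        + (Minv₁ 0 * M.rowMat (r₁ 0) + Minv 0 * M.rowMat (r₂ 0))) s₀ s₀) 0 :=
    hasDerivAt_entry (HasDerivAt.add ((hMinv₁d 0).mul (hRm 0)) ((hMinv 0).mul (hRm₁ 0))) s₀ s₀
  rw [hW2.deriv]
  -- scalar bounds
  have hC₁0 : 0 ≤ C₁ := le_trans (Finset.sum_nonneg fun a _ => abs_nonneg _) (hC₁ s₀)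
  have hC₂0 : 0 ≤ C₂ := le_trans (Finset.sum_nonneg fun a _ => abs_nonneg _) (hC₂ s₀)
  have hr0b : ∀ s, |M.rPol (π (θ + (0:ℝ) • u)) s| ≤ 1 := by
    intro s
    have hnn : 0 ≤ M.rPol (π (θ + (0:ℝ) • u)) s :=
      Finset.sum_nonneg fun a _ => mul_nonneg ((hpolicy _).1 s a) (hM.2.2.1 s a).1
    rw [abs_of_nonneg hnn]
    calc M.rPol (π (θ + (0:ℝ) • u)) s
        ≤ ∑ a, π (θ + (0:ℝ) • u) s a * 1 := by
          refine Finset.sum_le_sum fun a _ => ?_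
          exact mul_le_mul_of_nonneg_left (hM.2.2.1 s a).2 ((hpolicy _).1 s a)
      _ = 1 := by simpa using (hpolicy (θ + (0:ℝ) • u)).2 s
  have hrabs : ∀ s a, |M.r s a| ≤ 1 := fun s a =>
    abs_le.mpr ⟨by linarith [(hM.2.2.1 s a).1], (hM.2.2.1 s a).2⟩
  have hr₁b : ∀ s, |r₁ 0 s| ≤ C₁ := by
    intro s
    calc |r₁ 0 s| ≤ ∑ a, |deriv (fun α : ℝ => π (θ + α • u) s a) 0 * M.r s a| :=
          Finset.abs_sum_le_sum_abs _ _
      _ ≤ ∑ a, |deriv (fun α : ℝ => π (θ + α • u) s a) 0| := by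
          refine Finset.sum_le_sum fun a _ => ?_
          rw [abs_mul]
          calc |deriv (fun α : ℝ => π (θ + α • u) s a) 0| * |M.r s a|
              ≤ |deriv (fun α : ℝ => π (θ + α • u) s a) 0| * 1 :=
                mul_le_mul_of_nonneg_left (hrabs s a) (abs_nonneg _)
            _ = _ := mul_one _
      _ ≤ C₁ := hC₁ s
  have hr₂b : ∀ s, |r₂ 0 s| ≤ C₂ := by
    intro s
    calc |r₂ 0 s| ≤ ∑ a, |deriv (deriv (fun α : ℝ => π (θ + α • u) s a)) 0 * M.r s a| :=
          Finset.abs_sum_le_sum_abs _ _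
      _ ≤ ∑ a, |deriv (deriv (fun α : ℝ => π (θ + α • u) s a)) 0| := by
          refine Finset.sum_le_sum fun a _ => ?_
          rw [abs_mul]
          calc |deriv (deriv (fun α : ℝ => π (θ + α • u) s a)) 0| * |M.r s a|
              ≤ |deriv (deriv (fun α : ℝ => π (θ + α • u) s a)) 0| * 1 :=
                mul_le_mul_of_nonneg_left (hrabs s a) (abs_nonneg _)
            _ = _ := mul_one _
      _ ≤ C₂ := hC₂ s
  -- matrix norm bounds
  have hP₁n : ‖P₁ 0‖ ≤ C₁ := by
    refine norm_le_of_rowSums hC₁0 fun s => ?_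
    calc ∑ s', |P₁ 0 s s'|
        ≤ ∑ s', ∑ a, |deriv (fun α : ℝ => π (θ + α • u) s a) 0| * M.P s a s' := by
          refine Finset.sum_le_sum fun s' _ => ?_
          calc |P₁ 0 s s'|
              ≤ ∑ a, |deriv (fun α : ℝ => π (θ + α • u) s a) 0 * M.P s a s'| := by
                simp only [hP₁_def, Matrix.of_apply]
                exact Finset.abs_sum_le_sum_abs _ _
            _ = ∑ a, |deriv (fun α : ℝ => π (θ + α • u) s a) 0| * M.P s a s' := by
                refine Finset.sum_congr rfl fun a _ => ?_
                rw [abs_mul, abs_of_nonneg (hM.1 s a s')]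
      _ = ∑ a, |deriv (fun α : ℝ => π (θ + α • u) s a) 0| * ∑ s', M.P s a s' := by
          rw [Finset.sum_comm]; simp [Finset.mul_sum]
      _ = ∑ a, |deriv (fun α : ℝ => π (θ + α • u) s a) 0| := by simp [hM.2.1]
      _ ≤ C₁ := hC₁ s
  have hP₂n : ‖P₂ 0‖ ≤ C₂ := by
    refine norm_le_of_rowSums hC₂0 fun s => ?_
    calc ∑ s', |P₂ 0 s s'|
        ≤ ∑ s', ∑ a, |deriv (deriv (fun α : ℝ => π (θ + α • u) s a)) 0| * M.P s a s' := by
          refine Finset.sum_le_sum fun s' _ => ?_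
          calc |P₂ 0 s s'|
              ≤ ∑ a, |deriv (deriv (fun α : ℝ => π (θ + α • u) s a)) 0 * M.P s a s'| := by
                simp only [hP₂_def, Matrix.of_apply]
                exact Finset.abs_sum_le_sum_abs _ _
            _ = ∑ a, |deriv (deriv (fun α : ℝ => π (θ + α • u) s a)) 0| * M.P s a s' := by
                refine Finset.sum_congr rfl fun a _ => ?_
                rw [abs_mul, abs_of_nonneg (hM.1 s a s')]
      _ = ∑ a, |deriv (deriv (fun α : ℝ => π (θ + α • u) s a)) 0| * ∑ s', M.P s a s' := by
          rw [Finset.sum_comm]; simp [Finset.mul_sum]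
      _ = ∑ a, |deriv (deriv (fun α : ℝ => π (θ + α • u) s a)) 0| := by simp [hM.2.1]
      _ ≤ C₂ := hC₂ s
  have hκ0 : (0:ℝ) ≤ (1 - M.γ)⁻¹ := inv_nonneg.mpr hκpos.le
  have nrm3 : ∀ A B C : Matrix M.S M.S ℝ, ‖A * B * C‖ ≤ ‖A‖ * ‖B‖ * ‖C‖ := fun A B C =>
    le_trans (norm_mul_le _ _) (mul_le_mul_of_nonneg_right (norm_mul_le _ _) (norm_nonneg _))
  have b0 : ‖Minv 0‖ ≤ (1 - M.γ)⁻¹ := hMinvle 0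
  have b1 : ‖Minv₁ 0‖ ≤ M.γ * ((1 - M.γ)⁻¹ * C₁ * (1 - M.γ)⁻¹) := by
    simp only [hMinv₁_def]
    rw [norm_smul, Real.norm_eq_abs, abs_of_nonneg hγ0]
    refine mul_le_mul_of_nonneg_left ?_ hγ0
    calc ‖Minv 0 * P₁ 0 * Minv 0‖ ≤ ‖Minv 0‖ * ‖P₁ 0‖ * ‖Minv 0‖ := nrm3 _ _ _
      _ ≤ (1 - M.γ)⁻¹ * C₁ * (1 - M.γ)⁻¹ := by gcongr
  have hD0 : (0:ℝ) ≤ M.γ * ((1 - M.γ)⁻¹ * C₁ * (1 - M.γ)⁻¹) :=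
    mul_nonneg hγ0 (mul_nonneg (mul_nonneg hκ0 hC₁0) hκ0)
  have b2 : ‖Minv₂ 0‖ ≤ M.γ * ((M.γ * ((1 - M.γ)⁻¹ * C₁ * (1 - M.γ)⁻¹) * C₁
      + (1 - M.γ)⁻¹ * C₂) * (1 - M.γ)⁻¹
      + (1 - M.γ)⁻¹ * C₁ * (M.γ * ((1 - M.γ)⁻¹ * C₁ * (1 - M.γ)⁻¹))) := by
    simp only [hMinv₂_def]
    rw [norm_smul, Real.norm_eq_abs, abs_of_nonneg hγ0]
    refine mul_le_mul_of_nonneg_left ?_ hγ0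
    calc ‖(Minv₁ 0 * P₁ 0 + Minv 0 * P₂ 0) * Minv 0 + Minv 0 * P₁ 0 * Minv₁ 0‖
        ≤ ‖(Minv₁ 0 * P₁ 0 + Minv 0 * P₂ 0) * Minv 0‖ + ‖Minv 0 * P₁ 0 * Minv₁ 0‖ :=
          norm_add_le _ _
      _ ≤ (‖Minv₁ 0‖ * ‖P₁ 0‖ + ‖Minv 0‖ * ‖P₂ 0‖) * ‖Minv 0‖
          + ‖Minv 0‖ * ‖P₁ 0‖ * ‖Minv₁ 0‖ := by
          refine add_le_add (le_trans (norm_mul_le _ _) ?_) (nrm3 _ _ _)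
          refine mul_le_mul_of_nonneg_right ?_ (norm_nonneg (Minv 0))
          exact le_trans (norm_add_le _ _) (add_le_add (norm_mul_le _ _) (norm_mul_le _ _))
      _ ≤ _ := by gcongr
  -- entry bounds
  have e0 : |(Minv₂ 0 * Rm0 0) s₀ s₀| ≤ ‖Minv₂ 0‖ * 1 :=
    M.norm_rowMat_mul_le zero_le_one (Minv₂ 0) _ hr0b s₀ s₀
  have e1 : |(Minv₁ 0 * M.rowMat (r₁ 0)) s₀ s₀| ≤ ‖Minv₁ 0‖ * C₁ :=
    M.norm_rowMat_mul_le hC₁0 (Minv₁ 0) _ hr₁b s₀ s₀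
  have e2 : |(Minv 0 * M.rowMat (r₂ 0)) s₀ s₀| ≤ ‖Minv 0‖ * C₂ :=
    M.norm_rowMat_mul_le hC₂0 (Minv 0) _ hr₂b s₀ s₀
  have habs : |(Minv₂ 0 * Rm0 0 + Minv₁ 0 * M.rowMat (r₁ 0)
      + (Minv₁ 0 * M.rowMat (r₁ 0) + Minv 0 * M.rowMat (r₂ 0))) s₀ s₀|
      ≤ |(Minv₂ 0 * Rm0 0) s₀ s₀| + |(Minv₁ 0 * M.rowMat (r₁ 0)) s₀ s₀|
        + (|(Minv₁ 0 * M.rowMat (r₁ 0)) s₀ s₀| + |(Minv 0 * M.rowMat (r₂ 0)) s₀ s₀|) := by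
    simp only [Matrix.add_apply]
    exact le_trans (abs_add_le _ _) (add_le_add (abs_add_le _ _) (abs_add_le _ _))
  have key1 : ‖Minv₂ 0‖ * 1 ≤ M.γ * ((M.γ * ((1 - M.γ)⁻¹ * C₁ * (1 - M.γ)⁻¹) * C₁
      + (1 - M.γ)⁻¹ * C₂) * (1 - M.γ)⁻¹
      + (1 - M.γ)⁻¹ * C₁ * (M.γ * ((1 - M.γ)⁻¹ * C₁ * (1 - M.γ)⁻¹))) := by
    rw [mul_one]; exact b2
  have key2 : ‖Minv₁ 0‖ * C₁ ≤ M.γ * ((1 - M.γ)⁻¹ * C₁ * (1 - M.γ)⁻¹) * C₁ :=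
    mul_le_mul_of_nonneg_right b1 hC₁0
  have key3 : ‖Minv 0‖ * C₂ ≤ (1 - M.γ)⁻¹ * C₂ :=
    mul_le_mul_of_nonneg_right b0 hC₂0
  have hne : (1 : ℝ) - M.γ ≠ 0 := ne_of_gt hκpos
  have hRHS : M.γ * ((M.γ * ((1 - M.γ)⁻¹ * C₁ * (1 - M.γ)⁻¹) * C₁
      + (1 - M.γ)⁻¹ * C₂) * (1 - M.γ)⁻¹
      + (1 - M.γ)⁻¹ * C₁ * (M.γ * ((1 - M.γ)⁻¹ * C₁ * (1 - M.γ)⁻¹)))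
      + M.γ * ((1 - M.γ)⁻¹ * C₁ * (1 - M.γ)⁻¹) * C₁
      + (M.γ * ((1 - M.γ)⁻¹ * C₁ * (1 - M.γ)⁻¹) * C₁ + (1 - M.γ)⁻¹ * C₂)
      = C₂ / (1 - M.γ) ^ 2 + 2 * M.γ * C₁ ^ 2 / (1 - M.γ) ^ 3 :=
    rhs_arith M.γ C₁ C₂ hne
  linarith [e0, e1, e2, habs, key1, key2, key3]
end
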